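/- Suppose 0 ≤ R ≤ C(supp(Q)). Then: (1) C(supp(Q)) ≤ R_{−1}^{−}(Q); (2) E_c(R,Q) = E_c^{ML}(R,Q), the minimum defining E_c^{ML}(R,Q) is attained at a unique joint distribution T̆∘V̆, and this pair also attains E_c(R,Q); (3) the marginal Q̆(x) = ∑_y T̆(y)V̆(x|y) satisfies supp(Q̆) = supp(Q). -/

import Mathlib

open scoped BigOperators
open Filter Topology

/-- `f` is a probability mass function on a finite alphabet. -/
def IsPMF {α : Type*} [Fintype α] (f : α → ℝ) : Prop :=
  (∀ a, 0 ≤ f a) ∧ ∑ a, f a = 1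

/-- `P` is a discrete memoryless channel from `𝓧` to `𝓨`. -/
def IsChannel {𝓧 𝓨 : Type*} [Fintype 𝓧] [Fintype 𝓨] (P : 𝓧 → 𝓨 → ℝ) : Prop :=
  ∀ x, IsPMF (P x)

/-- `V` is a conditional pmf on `𝓧` given `𝓨`. -/
def IsCondPMF {𝓧 𝓨 : Type*} [Fintype 𝓧] [Fintype 𝓨] (V : 𝓨 → 𝓧 → ℝ) : Prop :=
  ∀ y, IsPMF (V y)

/-- one term `s·log(s/t)` of a KL divergence, with the conventions
    `0·log(0/t) = 0` and `s·log(s/0) = +∞` for `s > 0`. -/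
noncomputable def klTerm (s t : ℝ) : EReal :=
  if s = 0 then 0 else if t = 0 then ⊤ else ((s * Real.log (s / t) : ℝ) : EReal)

/-- `D(T∘V ‖ Q∘P)`. -/
noncomputable def DQP {𝓧 𝓨 : Type*} [Fintype 𝓧] [Fintype 𝓨]
    (T : 𝓨 → ℝ) (V : 𝓨 → 𝓧 → ℝ) (Q : 𝓧 → ℝ) (P : 𝓧 → 𝓨 → ℝ) : EReal :=
  ∑ y, ∑ x, klTerm (T y * V y x) (Q x * P x y)

/-- `D(T∘V ‖ T×Q)`. -/
noncomputable def DTQ {𝓧 𝓨 : Type*} [Fintype 𝓧] [Fintype 𝓨]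
    (T : 𝓨 → ℝ) (V : 𝓨 → 𝓧 → ℝ) (Q : 𝓧 → ℝ) : EReal :=
  ∑ y, ∑ x, klTerm (T y * V y x) (T y * Q x)

/-- Gallager's function `E₀(ρ,Q)` (for `ρ > −1`). -/
noncomputable def E0 {𝓧 𝓨 : Type*} [Fintype 𝓧] [Fintype 𝓨]
    (ρ : ℝ) (Q : 𝓧 → ℝ) (P : 𝓧 → 𝓨 → ℝ) : ℝ :=
  - Real.log (∑ y, (∑ x, Q x * P x y ^ (1 / (1 + ρ))) ^ (1 + ρ))

/-- The joint distribution `T_ρ∘V_ρ` on `𝓧 × 𝓨` (for `ρ > −1`). -/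
noncomputable def Jrho {𝓧 𝓨 : Type*} [Fintype 𝓧] [Fintype 𝓨]
    (ρ : ℝ) (Q : 𝓧 → ℝ) (P : 𝓧 → 𝓨 → ℝ) (x : 𝓧) (y : 𝓨) : ℝ :=
  Q x * P x y ^ (1 / (1 + ρ)) * (∑ a, Q a * P a y ^ (1 / (1 + ρ))) ^ ρ /
    ∑ y', (∑ a, Q a * P a y' ^ (1 / (1 + ρ))) ^ (1 + ρ)

/-- `max_{x : Q(x) > 0} P(y|x)`. -/
noncomputable def maxP {𝓧 𝓨 : Type*} (Q : 𝓧 → ℝ) (P : 𝓧 → 𝓨 → ℝ) (y : 𝓨) : ℝ :=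
  ⨆ x : {x // 0 < Q x}, P x.1 y

/-- `E₀(−1,Q) = −log ∑_y max_{x : Q(x)>0} P(y|x)`. -/
noncomputable def E0m1 {𝓧 𝓨 : Type*} [Fintype 𝓧] [Fintype 𝓨]
    (Q : 𝓧 → ℝ) (P : 𝓧 → 𝓨 → ℝ) : ℝ :=
  - Real.log (∑ y, maxP Q P y)

/-- `E₀(ρ,Q)` extended to `ρ = −1`. -/
noncomputable def E0full {𝓧 𝓨 : Type*} [Fintype 𝓧] [Fintype 𝓨]
    (ρ : ℝ) (Q : 𝓧 → ℝ) (P : 𝓧 → 𝓨 → ℝ) : ℝ :=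
  if ρ = -1 then E0m1 Q P else E0 ρ Q P

/-- `T_{−1}(y) ∝ max_{a : Q(a)>0} P(y|a)`. -/
noncomputable def Tm1 {𝓧 𝓨 : Type*} [Fintype 𝓧] [Fintype 𝓨]
    (Q : 𝓧 → ℝ) (P : 𝓧 → 𝓨 → ℝ) (y : 𝓨) : ℝ :=
  maxP Q P y / ∑ y', maxP Q P y'

/-- `V` is admissible at `ρ = −1`: `V(x|y) = 0` for every `x` outside
    `argmax_{a : Q(a)>0} P(y|a)`. -/
def AdmissibleAtM1 {𝓧 𝓨 : Type*} [Fintype 𝓧] [Fintype 𝓨]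
    (Q : 𝓧 → ℝ) (P : 𝓧 → 𝓨 → ℝ) (V : 𝓨 → 𝓧 → ℝ) : Prop :=
  ∀ y x, ¬ (0 < Q x ∧ ∀ a, 0 < Q a → P a y ≤ P x y) → V y x = 0

/-- the error exponent `E_e(R,Q)`. -/
noncomputable def Ee {𝓧 𝓨 : Type*} [Fintype 𝓧] [Fintype 𝓨]
    (R : ℝ) (Q : 𝓧 → ℝ) (P : 𝓧 → 𝓨 → ℝ) : EReal :=
  sInf {v | ∃ T : 𝓨 → ℝ, ∃ V : 𝓨 → 𝓧 → ℝ, IsPMF T ∧ IsCondPMF V ∧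
    v = DQP T V Q P + max (DTQ T V Q - (R : EReal)) 0}

/-- the ML correct-decoding exponent `E_c^{ML}(R,Q)`. -/
noncomputable def EcML {𝓧 𝓨 : Type*} [Fintype 𝓧] [Fintype 𝓨]
    (R : ℝ) (Q : 𝓧 → ℝ) (P : 𝓧 → 𝓨 → ℝ) : EReal :=
  sInf {v | ∃ T : 𝓨 → ℝ, ∃ V : 𝓨 → 𝓧 → ℝ, IsPMF T ∧ IsCondPMF V ∧
    v = DQP T V Q P + max ((R : EReal) - DTQ T V Q) 0}

/-- the strict correct-decoding exponent `E_c(R,Q)` (`+∞` if infeasible). -/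
noncomputable def Ec {𝓧 𝓨 : Type*} [Fintype 𝓧] [Fintype 𝓨]
    (R : ℝ) (Q : 𝓧 → ℝ) (P : 𝓧 → 𝓨 → ℝ) : EReal :=
  sInf {v | ∃ T : 𝓨 → ℝ, ∃ V : 𝓨 → 𝓧 → ℝ, IsPMF T ∧ IsCondPMF V ∧
    (R : EReal) ≤ DTQ T V Q ∧ v = DQP T V Q P}

/-- the mutual information `I(Q∘P)`. -/
noncomputable def MI {𝓧 𝓨 : Type*} [Fintype 𝓧] [Fintype 𝓨]
    (Q : 𝓧 → ℝ) (P : 𝓧 → 𝓨 → ℝ) : ℝ :=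
  ∑ x, ∑ y, if Q x * P x y = 0 then 0
    else Q x * P x y * Real.log (P x y / ∑ a, Q a * P a y)

/-- the capacity `C(Z)` of the channel restricted to input letters in `Z`. -/
noncomputable def capacity {𝓧 𝓨 : Type*} [Fintype 𝓧] [Fintype 𝓨]
    (P : 𝓧 → 𝓨 → ℝ) (Z : Set 𝓧) : ℝ :=
  sSup {c | ∃ Q' : 𝓧 → ℝ, IsPMF Q' ∧ (∀ x, 0 < Q' x → x ∈ Z) ∧ c = MI Q' P}

/-- `R_{−1}^{−}(Q)`. -/
noncomputable def Rm1minus {𝓧 𝓨 : Type*} [Fintype 𝓧] [Fintype 𝓨]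
    (Q : 𝓧 → ℝ) (P : 𝓧 → 𝓨 → ℝ) : EReal :=
  sInf {v | ∃ V : 𝓨 → 𝓧 → ℝ, IsCondPMF V ∧ AdmissibleAtM1 Q P V ∧
    v = DTQ (Tm1 Q P) V Q}

/-- `R_{−1}^{+}(Q)`. -/
noncomputable def Rm1plus {𝓧 𝓨 : Type*} [Fintype 𝓧] [Fintype 𝓨]
    (Q : 𝓧 → ℝ) (P : 𝓧 → 𝓨 → ℝ) : EReal :=
  sSup {v | ∃ V : 𝓨 → 𝓧 → ℝ, IsCondPMF V ∧ AdmissibleAtM1 Q P V ∧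
    v = DTQ (Tm1 Q P) V Q}

/-- `F_ρ(T∘V, Q) = D(T∘V‖Q∘P) + ρ·D(T∘V‖T×Q)`. -/
noncomputable def Frho {𝓧 𝓨 : Type*} [Fintype 𝓧] [Fintype 𝓨]
    (ρ : ℝ) (T : 𝓨 → ℝ) (V : 𝓨 → 𝓧 → ℝ) (Q : 𝓧 → ℝ) (P : 𝓧 → 𝓨 → ℝ) : EReal :=
  DQP T V Q P + (ρ : EReal) * DTQ T V Q

/-- the unconstrained penalized minimum
    `min_{T,V} { D(T∘V‖Q∘P) + ρ·(D(T∘V‖T×Q) − R) }`. -/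
noncomputable def penMin {𝓧 𝓨 : Type*} [Fintype 𝓧] [Fintype 𝓨]
    (Q : 𝓧 → ℝ) (P : 𝓧 → 𝓨 → ℝ) (R ρ : ℝ) : EReal :=
  sInf {v | ∃ T : 𝓨 → ℝ, ∃ V : 𝓨 → 𝓧 → ℝ, IsPMF T ∧ IsCondPMF V ∧
    v = DQP T V Q P + (ρ : EReal) * (DTQ T V Q - (R : EReal))}

/-- the support-constrained penalized minimum
    `min_{T,V : supp(V) ⊆ supp(Q)} { D(T∘V‖Q∘P) − ρ·(R − D(T∘V‖T×Q)) }`. -/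
noncomputable def penMinS {𝓧 𝓨 : Type*} [Fintype 𝓧] [Fintype 𝓨]
    (Q : 𝓧 → ℝ) (P : 𝓧 → 𝓨 → ℝ) (R ρ : ℝ) : EReal :=
  sInf {v | ∃ T : 𝓨 → ℝ, ∃ V : 𝓨 → 𝓧 → ℝ, IsPMF T ∧ IsCondPMF V ∧
    (∀ y x, Q x = 0 → V y x = 0) ∧
    v = DQP T V Q P - (ρ : EReal) * ((R : EReal) - DTQ T V Q)}

/- ===== auxiliary development ===== -/

open Filter Topology Set

noncomputable def rkl (s t : ℝ) : ℝ := if s = 0 then 0 else s * Real.log (s / t)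

lemma rkl_self (s : ℝ) : rkl s s = 0 := by
  unfold rkl; split
  · rfl
  · rename_i h; rw [div_self h, Real.log_one, mul_zero]

lemma rkl_zero (t : ℝ) : rkl 0 t = 0 := by unfold rkl; simp

lemma rkl_ge {s t : ℝ} (hs : 0 ≤ s) (ht : 0 ≤ t) (h : s ≠ 0 → t ≠ 0) : s - t ≤ rkl s t := by
  unfold rkl; split
  · rename_i h0; subst h0; linarith
  · rename_i h0
    have hs' : 0 < s := lt_of_le_of_ne hs (Ne.symm h0)
    have ht' : 0 < t := lt_of_le_of_ne ht (Ne.symm (h h0))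
    have hlog : Real.log (t / s) ≤ t / s - 1 := Real.log_le_sub_one_of_pos (by positivity)
    rw [Real.log_div ht'.ne' hs'.ne'] at hlog
    rw [Real.log_div hs'.ne' ht'.ne']
    have h2 : (t/s) * s = t := by field_simp
    nlinarith [hs']

lemma rkl_gt {s t : ℝ} (hs : 0 ≤ s) (ht : 0 ≤ t) (h : s ≠ 0 → t ≠ 0) (hne : s ≠ t) :
    s - t < rkl s t := by
  unfold rkl; split
  · rename_i h0; subst h0
    have h1 : t ≠ 0 := fun h' => hne h'.symm
    have : 0 < t := lt_of_le_of_ne ht (Ne.symm h1)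
    linarith
  · rename_i h0
    have hs' : 0 < s := lt_of_le_of_ne hs (Ne.symm h0)
    have ht' : 0 < t := lt_of_le_of_ne ht (Ne.symm (h h0))
    have hq : t / s ≠ 1 := by
      intro hq; apply hne; field_simp at hq; linarith
    have hlog : Real.log (t / s) < t / s - 1 := Real.log_lt_sub_one_of_pos (by positivity) hq
    rw [Real.log_div ht'.ne' hs'.ne'] at hlog
    rw [Real.log_div hs'.ne' ht'.ne']
    have h2 : (t/s) * s = t := by field_simp
    nlinarith [hs']

lemma gibbs_le {ι : Type*} [Fintype ι] (s t : ι → ℝ) (hs : ∀ i, 0 ≤ s i) (ht : ∀ i, 0 ≤ t i)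
    (hac : ∀ i, s i ≠ 0 → t i ≠ 0) (hsum : ∑ i, t i ≤ ∑ i, s i) :
    0 ≤ ∑ i, rkl (s i) (t i) := by
  have h1 : ∑ i, (s i - t i) ≤ ∑ i, rkl (s i) (t i) :=
    Finset.sum_le_sum fun i _ => rkl_ge (hs i) (ht i) (hac i)
  rw [Finset.sum_sub_distrib] at h1
  linarith

lemma gibbs_eq {ι : Type*} [Fintype ι] (s t : ι → ℝ) (hs : ∀ i, 0 ≤ s i) (ht : ∀ i, 0 ≤ t i)
    (hac : ∀ i, s i ≠ 0 → t i ≠ 0) (hsum : ∑ i, t i ≤ ∑ i, s i)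
    (hle : ∑ i, rkl (s i) (t i) ≤ 0) : ∀ i, s i = t i := by
  by_contra hcon
  push_neg at hcon
  obtain ⟨j, hj⟩ := hcon
  have h1 : ∑ i, (s i - t i) < ∑ i, rkl (s i) (t i) := by
    apply Finset.sum_lt_sum
    · exact fun i _ => rkl_ge (hs i) (ht i) (hac i)
    · exact ⟨j, Finset.mem_univ j, rkl_gt (hs j) (ht j) (hac j) hj⟩
  rw [Finset.sum_sub_distrib] at h1
  linarith

lemma ecoe_sum {ι : Type*} (s : Finset ι) (f : ι → ℝ) :
    ((∑ i ∈ s, f i : ℝ) : EReal) = ∑ i ∈ s, ((f i : ℝ) : EReal) := by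
  induction s using Finset.cons_induction with
  | empty => simp
  | cons a s' ha ih => rw [Finset.sum_cons, Finset.sum_cons, EReal.coe_add, ih]

lemma klTerm_ne_bot (s t : ℝ) : klTerm s t ≠ ⊥ := by
  unfold klTerm; split
  · simp
  · split
    · simp
    · exact EReal.coe_ne_bot _

lemma klTerm_eq_rkl {s t : ℝ} (h : s ≠ 0 → t ≠ 0) : klTerm s t = ((rkl s t : ℝ) : EReal) := by
  unfold klTerm rkl; split
  · simp
  · rename_i h0; rw [if_neg (h h0)]

lemma sum_ne_bot {ι : Type*} (s : Finset ι) (f : ι → EReal) (h : ∀ i, f i ≠ ⊥) :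
    ∑ i ∈ s, f i ≠ ⊥ := by
  induction s using Finset.cons_induction with
  | empty => simp
  | cons a s' ha ih =>
    rw [Finset.sum_cons]
    intro hc
    rcases EReal.add_eq_bot_iff.mp hc with h' | h'
    · exact h a h'
    · exact ih h'

section Main

set_option linter.unusedSectionVars false
variable {𝓧 𝓨 : Type*} [Fintype 𝓧] [Fintype 𝓨] [Nonempty 𝓧] [Nonempty 𝓨]

/-- sum of two nonneg reals version of sum over pairs -/
lemma sum2_eq_prod (f : 𝓨 → 𝓧 → ℝ) :
    ∑ y, ∑ x, f y x = ∑ p : 𝓨 × 𝓧, f p.1 p.2 := by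
  rw [Fintype.sum_prod_type]

lemma sum2_eq_prod_ereal (f : 𝓨 → 𝓧 → EReal) :
    ∑ y, ∑ x, f y x = ∑ p : 𝓨 × 𝓧, f p.1 p.2 := by
  rw [Fintype.sum_prod_type]

lemma gibbs2_le (s t : 𝓨 → 𝓧 → ℝ) (hs : ∀ y x, 0 ≤ s y x) (ht : ∀ y x, 0 ≤ t y x)
    (hac : ∀ y x, s y x ≠ 0 → t y x ≠ 0) (hsum : ∑ y, ∑ x, t y x ≤ ∑ y, ∑ x, s y x) :
    0 ≤ ∑ y, ∑ x, rkl (s y x) (t y x) := by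
  rw [sum2_eq_prod]
  exact gibbs_le (fun p : 𝓨 × 𝓧 => s p.1 p.2) (fun p => t p.1 p.2) (fun p => hs p.1 p.2)
    (fun p => ht p.1 p.2) (fun p => hac p.1 p.2)
    (by rw [sum2_eq_prod (fun a b => t a b), sum2_eq_prod (fun a b => s a b)] at hsum; exact hsum)

lemma gibbs2_eq (s t : 𝓨 → 𝓧 → ℝ) (hs : ∀ y x, 0 ≤ s y x) (ht : ∀ y x, 0 ≤ t y x)
    (hac : ∀ y x, s y x ≠ 0 → t y x ≠ 0) (hsum : ∑ y, ∑ x, t y x ≤ ∑ y, ∑ x, s y x)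
    (hle : ∑ y, ∑ x, rkl (s y x) (t y x) ≤ 0) : ∀ y x, s y x = t y x := by
  intro y x
  have := gibbs_eq (fun p : 𝓨 × 𝓧 => s p.1 p.2) (fun p => t p.1 p.2)
    (fun p => hs p.1 p.2) (fun p => ht p.1 p.2) (fun p => hac p.1 p.2)
    (by rw [sum2_eq_prod (fun a b => t a b), sum2_eq_prod (fun a b => s a b)] at hsum; exact hsum)
    (by rw [sum2_eq_prod (fun a b => rkl (s a b) (t a b))] at hle; exact hle) (y, x)
  exact this

/-- real versions of the divergences -/
noncomputable def DQPr (T : 𝓨 → ℝ) (V : 𝓨 → 𝓧 → ℝ) (Q : 𝓧 → ℝ) (P : 𝓧 → 𝓨 → ℝ) : ℝ :=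
  ∑ y, ∑ x, rkl (T y * V y x) (Q x * P x y)

noncomputable def DTQr (T : 𝓨 → ℝ) (V : 𝓨 → 𝓧 → ℝ) (Q : 𝓧 → ℝ) : ℝ :=
  ∑ y, ∑ x, rkl (T y * V y x) (T y * Q x)

lemma sum2_klTerm_eq (s t : 𝓨 → 𝓧 → ℝ) (h : ∀ y x, s y x ≠ 0 → t y x ≠ 0) :
    ∑ y, ∑ x, klTerm (s y x) (t y x) = ((∑ y, ∑ x, rkl (s y x) (t y x) : ℝ) : EReal) := by
  rw [ecoe_sum]
  apply Finset.sum_congr rfl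
  intro y _
  rw [ecoe_sum]
  exact Finset.sum_congr rfl fun x _ => klTerm_eq_rkl (h y x)

lemma sum2_klTerm_top (s t : 𝓨 → 𝓧 → ℝ) (y : 𝓨) (x : 𝓧) (hs : s y x ≠ 0) (ht : t y x = 0) :
    ∑ y, ∑ x, klTerm (s y x) (t y x) = ⊤ := by
  classical
  have hinner : ∑ x, klTerm (s y x) (t y x) = ⊤ := by
    rw [← Finset.add_sum_erase _ _ (Finset.mem_univ x)]
    · have : klTerm (s y x) (t y x) = ⊤ := by unfold klTerm; rw [if_neg hs, if_pos ht]
      rw [this]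
      exact EReal.top_add_of_ne_bot (sum_ne_bot _ _ fun i => klTerm_ne_bot _ _)
  rw [← Finset.add_sum_erase _ _ (Finset.mem_univ y), hinner]
  exact EReal.top_add_of_ne_bot (sum_ne_bot _ _ fun i => sum_ne_bot _ _ fun j => klTerm_ne_bot _ _)

lemma DQP_eq_coe (T : 𝓨 → ℝ) (V : 𝓨 → 𝓧 → ℝ) (Q : 𝓧 → ℝ) (P : 𝓧 → 𝓨 → ℝ)
    (h : ∀ y x, T y * V y x ≠ 0 → Q x * P x y ≠ 0) :
    DQP T V Q P = ((DQPr T V Q P : ℝ) : EReal) :=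
  sum2_klTerm_eq _ _ h

lemma DTQ_eq_coe (T : 𝓨 → ℝ) (V : 𝓨 → 𝓧 → ℝ) (Q : 𝓧 → ℝ)
    (h : ∀ y x, T y * V y x ≠ 0 → T y * Q x ≠ 0) :
    DTQ T V Q = ((DTQr T V Q : ℝ) : EReal) :=
  sum2_klTerm_eq _ _ h

/- ===== basic facts about Q, maxP, S0 ===== -/

noncomputable def S0 (Q : 𝓧 → ℝ) (P : 𝓧 → 𝓨 → ℝ) : ℝ := ∑ y, maxP Q P y

def isArgmax (Q : 𝓧 → ℝ) (P : 𝓧 → 𝓨 → ℝ) (y : 𝓨) (x : 𝓧) : Prop :=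
  0 < Q x ∧ ∀ a, 0 < Q a → P a y ≤ P x y

open Classical in
noncomputable def QA (Q : 𝓧 → ℝ) (P : 𝓧 → 𝓨 → ℝ) (y : 𝓨) : ℝ :=
  ∑ x, if isArgmax Q P y x then Q x else 0

open Classical in
noncomputable def Vstar (Q : 𝓧 → ℝ) (P : 𝓧 → 𝓨 → ℝ) (y : 𝓨) (x : 𝓧) : ℝ :=
  if isArgmax Q P y x then Q x / QA Q P y else 0

variable {P : 𝓧 → 𝓨 → ℝ} {Q : 𝓧 → ℝ}

lemma exists_Qpos (hQ : IsPMF Q) : ∃ x, 0 < Q x := by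
  by_contra h
  push_neg at h
  have : ∀ x, Q x = 0 := fun x => le_antisymm (h x) (hQ.1 x)
  have hs := hQ.2
  rw [Finset.sum_eq_zero (fun x _ => this x)] at hs
  norm_num at hs

lemma exists_argmax (hQ : IsPMF Q) (y : 𝓨) :
    ∃ x, isArgmax Q P y x ∧ P x y = maxP Q P y := by
  have hne : Nonempty {x // 0 < Q x} := by
    obtain ⟨x, hx⟩ := exists_Qpos hQ
    exact ⟨⟨x, hx⟩⟩
  obtain ⟨x0, hx0⟩ := Finite.exists_max (fun x : {x // 0 < Q x} => P x.1 y)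
  refine ⟨x0.1, ⟨x0.2, fun a ha => hx0 ⟨a, ha⟩⟩, ?_⟩
  apply le_antisymm
  · exact le_ciSup (f := fun x : {x // 0 < Q x} => P x.1 y) (Set.Finite.bddAbove (Set.finite_range _)) x0
  · exact ciSup_le fun x => hx0 x

lemma le_maxP (hQ : IsPMF Q) {x : 𝓧} (y : 𝓨) (hx : 0 < Q x) : P x y ≤ maxP Q P y := by
  obtain ⟨x0, hx0, hPx0⟩ := exists_argmax (P := P) hQ y
  rw [← hPx0]
  exact hx0.2 x hx

lemma isArgmax_maxP (hQ : IsPMF Q) {y : 𝓨} {x : 𝓧} (h : isArgmax Q P y x) :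
    P x y = maxP Q P y := by
  obtain ⟨x0, hx0, hPx0⟩ := exists_argmax (P := P) hQ y
  exact le_antisymm (le_maxP hQ y h.1) (hPx0 ▸ h.2 x0 hx0.1)

lemma maxP_nonneg (hP : IsChannel P) (hQ : IsPMF Q) (y : 𝓨) : 0 ≤ maxP Q P y := by
  obtain ⟨x0, hx0, hPx0⟩ := exists_argmax (P := P) hQ y
  rw [← hPx0]; exact (hP x0).1 y

lemma one_le_S0 (hP : IsChannel P) (hQ : IsPMF Q) : 1 ≤ S0 Q P := by
  obtain ⟨x, hx⟩ := exists_Qpos hQ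
  calc (1:ℝ) = ∑ y, P x y := (hP x).2.symm
  _ ≤ ∑ y, maxP Q P y := Finset.sum_le_sum fun y _ => le_maxP hQ y hx
  _ = S0 Q P := rfl

lemma S0_pos (hP : IsChannel P) (hQ : IsPMF Q) : 0 < S0 Q P :=
  lt_of_lt_of_le one_pos (one_le_S0 hP hQ)

lemma Tm1_eq (y : 𝓨) : Tm1 Q P y = maxP Q P y / S0 Q P := rfl

lemma Tm1_nonneg (hP : IsChannel P) (hQ : IsPMF Q) (y : 𝓨) : 0 ≤ Tm1 Q P y :=
  div_nonneg (maxP_nonneg hP hQ y) (S0_pos hP hQ).le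

lemma Tm1_pmf (hP : IsChannel P) (hQ : IsPMF Q) : IsPMF (Tm1 Q P) := by
  refine ⟨Tm1_nonneg hP hQ, ?_⟩
  unfold Tm1
  rw [← Finset.sum_div]
  exact div_self (S0_pos hP hQ).ne'

lemma QA_pos (hQ : IsPMF Q) (y : 𝓨) : 0 < QA Q P y := by
  classical
  obtain ⟨x0, hx0, _⟩ := exists_argmax (P := P) hQ y
  unfold QA
  apply Finset.sum_pos' (fun x _ => by split <;> [exact (hQ.1 x).trans (le_refl _); exact le_refl 0])
  refine ⟨x0, Finset.mem_univ x0, ?_⟩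
  simp only [if_pos hx0]
  exact hx0.1

lemma Vstar_nonneg (hQ : IsPMF Q) (y : 𝓨) (x : 𝓧) : 0 ≤ Vstar Q P y x := by
  unfold Vstar; split
  · exact div_nonneg (hQ.1 x) (QA_pos hQ y).le
  · exact le_refl 0

lemma Vstar_pmf (hQ : IsPMF Q) : IsCondPMF (Vstar Q P) := by
  classical
  intro y
  refine ⟨Vstar_nonneg hQ y, ?_⟩
  unfold Vstar
  have h1 : ∀ x, (if isArgmax Q P y x then Q x / QA Q P y else 0)
      = (if isArgmax Q P y x then Q x else 0) / QA Q P y := by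
    intro x; split <;> simp
  rw [Finset.sum_congr rfl (fun x _ => h1 x), ← Finset.sum_div]
  have h2 : (∑ x, if isArgmax Q P y x then Q x else 0) = QA Q P y := rfl
  rw [h2]
  exact div_self (QA_pos hQ y).ne'

lemma Vstar_admissible : AdmissibleAtM1 Q P (Vstar Q P) := by
  intro y x h
  unfold Vstar
  exact if_neg (fun hc => h hc)

/- ===== sums of joints ===== -/

lemma row_sum (T : 𝓨 → ℝ) {V : 𝓨 → 𝓧 → ℝ} (hV : IsCondPMF V) (y : 𝓨) :
    ∑ x, T y * V y x = T y := by
  rw [← Finset.mul_sum, (hV y).2, mul_one]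

lemma joint_sum_one {T : 𝓨 → ℝ} {V : 𝓨 → 𝓧 → ℝ} (hT : IsPMF T) (hV : IsCondPMF V) :
    ∑ y, ∑ x, T y * V y x = 1 := by
  rw [Finset.sum_congr rfl (fun y _ => row_sum T hV y)]
  exact hT.2

lemma sumQP_one (hP : IsChannel P) (hQ : IsPMF Q) : ∑ y, ∑ x, Q x * P x y = 1 := by
  rw [Finset.sum_comm]
  have : ∀ x, ∑ y, Q x * P x y = Q x := by
    intro x; rw [← Finset.mul_sum, (hP x).2, mul_one]
  rw [Finset.sum_congr rfl (fun x _ => this x)]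
  exact hQ.2

lemma joint_nonneg {T : 𝓨 → ℝ} {V : 𝓨 → 𝓧 → ℝ} (hT : IsPMF T) (hV : IsCondPMF V) (y : 𝓨) (x : 𝓧) :
    0 ≤ T y * V y x := mul_nonneg (hT.1 y) ((hV y).1 x)

lemma DQPr_nonneg (hP : IsChannel P) (hQ : IsPMF Q) {T : 𝓨 → ℝ} {V : 𝓨 → 𝓧 → ℝ}
    (hT : IsPMF T) (hV : IsCondPMF V)
    (hac : ∀ y x, T y * V y x ≠ 0 → Q x * P x y ≠ 0) : 0 ≤ DQPr T V Q P :=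
  gibbs2_le _ _ (joint_nonneg hT hV) (fun y x => mul_nonneg (hQ.1 x) ((hP x).1 y)) hac
    (by rw [joint_sum_one hT hV, sumQP_one hP hQ])

lemma DQPr_eq0 (hP : IsChannel P) (hQ : IsPMF Q) {T : 𝓨 → ℝ} {V : 𝓨 → 𝓧 → ℝ}
    (hT : IsPMF T) (hV : IsCondPMF V)
    (hac : ∀ y x, T y * V y x ≠ 0 → Q x * P x y ≠ 0) (hle : DQPr T V Q P ≤ 0) :
    ∀ y x, T y * V y x = Q x * P x y :=
  gibbs2_eq _ _ (joint_nonneg hT hV) (fun y x => mul_nonneg (hQ.1 x) ((hP x).1 y)) hac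
    (by rw [joint_sum_one hT hV, sumQP_one hP hQ]) hle

lemma rkl_div_const {s t c : ℝ} (hc : 0 < c) (h : s ≠ 0 → t ≠ 0) :
    rkl s (t / c) = rkl s t + s * Real.log c := by
  unfold rkl; split
  · rename_i h0; subst h0; simp
  · rename_i h0
    have ht : t ≠ 0 := h h0
    have : s / (t / c) = s / t * c := by field_simp
    rw [this, Real.log_mul (div_ne_zero h0 ht) hc.ne']
    ring

/- ===== the identity for admissible V at rho = -1 ===== -/

lemma DTQr_adm (hP : IsChannel P) (hQ : IsPMF Q) {V : 𝓨 → 𝓧 → ℝ}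
    (hV : IsCondPMF V) (hadm : AdmissibleAtM1 Q P V) :
    DTQr (Tm1 Q P) V Q = DQPr (Tm1 Q P) V Q P + Real.log (S0 Q P) := by
  have hS := S0_pos hP hQ
  have key : ∀ y x, rkl (Tm1 Q P y * V y x) (Tm1 Q P y * Q x)
      = rkl (Tm1 Q P y * V y x) (Q x * P x y) + (Tm1 Q P y * V y x) * Real.log (S0 Q P) := by
    intro y x
    by_cases hs : Tm1 Q P y * V y x = 0
    · rw [hs, rkl_zero, rkl_zero, zero_mul, add_zero]
    · have hT : Tm1 Q P y ≠ 0 := fun h => hs (by rw [h, zero_mul])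
      have hVx : V y x ≠ 0 := fun h => hs (by rw [h, mul_zero])
      have hArg : isArgmax Q P y x := by
        by_contra hA
        exact hVx (hadm y x hA)
      have hPm : P x y = maxP Q P y := isArgmax_maxP hQ hArg
      have hmax : maxP Q P y ≠ 0 := by
        intro h0; apply hT; rw [Tm1_eq, h0, zero_div]
      have ht2 : Tm1 Q P y * Q x = Q x * P x y / S0 Q P := by
        rw [Tm1_eq, hPm]; field_simp
      rw [ht2, rkl_div_const hS]
      intro _
      exact mul_ne_zero (fun h => hArg.1.ne' h) (hPm ▸ hmax)
  unfold DTQr DQPr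
  rw [Finset.sum_congr rfl (fun y _ => Finset.sum_congr rfl (fun x _ => key y x))]
  rw [Finset.sum_congr rfl (fun y _ => Finset.sum_add_distrib), Finset.sum_add_distrib]
  congr 1
  have : ∀ y, ∑ x, Tm1 Q P y * V y x * Real.log (S0 Q P)
      = (∑ x, Tm1 Q P y * V y x) * Real.log (S0 Q P) := fun y => (Finset.sum_mul _ _ _).symm
  rw [Finset.sum_congr rfl (fun y _ => this y), ← Finset.sum_mul]
  rw [joint_sum_one (Tm1_pmf hP hQ) hV, one_mul]

lemma adm_ac (hP : IsChannel P) (hQ : IsPMF Q) {V : 𝓨 → 𝓧 → ℝ}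
    (hV : IsCondPMF V) (hadm : AdmissibleAtM1 Q P V) :
    ∀ y x, Tm1 Q P y * V y x ≠ 0 → Q x * P x y ≠ 0 := by
  intro y x hs
  have hT : Tm1 Q P y ≠ 0 := fun h => hs (by rw [h, zero_mul])
  have hVx : V y x ≠ 0 := fun h => hs (by rw [h, mul_zero])
  have hArg : isArgmax Q P y x := by
    by_contra hA
    exact hVx (hadm y x hA)
  have hmax : maxP Q P y ≠ 0 := by
    intro h0; apply hT; rw [Tm1_eq, h0, zero_div]
  exact mul_ne_zero hArg.1.ne' ((isArgmax_maxP hQ hArg) ▸ hmax)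

lemma logS0_le_DTQr_adm (hP : IsChannel P) (hQ : IsPMF Q) {V : 𝓨 → 𝓧 → ℝ}
    (hV : IsCondPMF V) (hadm : AdmissibleAtM1 Q P V) :
    Real.log (S0 Q P) ≤ DTQr (Tm1 Q P) V Q := by
  rw [DTQr_adm hP hQ hV hadm]
  have := DQPr_nonneg hP hQ (Tm1_pmf hP hQ) hV (adm_ac hP hQ hV hadm)
  linarith

/- ===== capacity bound ===== -/

lemma MI_le_logS0 (hP : IsChannel P) (hQ : IsPMF Q) (Q' : 𝓧 → ℝ) (hQ' : IsPMF Q')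
    (hsupp : ∀ x, 0 < Q' x → 0 < Q x) : MI Q' P ≤ Real.log (S0 Q P) := by
  have hS := S0_pos hP hQ
  set m : 𝓨 → ℝ := fun y => ∑ a, Q' a * P a y with hm
  have hm_nonneg : ∀ y, 0 ≤ m y := fun y =>
    Finset.sum_nonneg fun a _ => mul_nonneg (hQ'.1 a) ((hP a).1 y)
  have hm_ge : ∀ x y, Q' x * P x y ≤ m y := by
    intro x y
    exact Finset.single_le_sum (fun a _ => mul_nonneg (hQ'.1 a) ((hP a).1 y)) (Finset.mem_univ x)
  have hm_sum : ∑ y, m y = 1 := sumQP_one hP hQ'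
  have hterm_pos : ∀ x y, Q' x * P x y ≠ 0 → 0 < Q' x ∧ 0 < P x y := by
    intro x y h
    constructor
    · exact lt_of_le_of_ne (hQ'.1 x) (Ne.symm (left_ne_zero_of_mul h))
    · exact lt_of_le_of_ne ((hP x).1 y) (Ne.symm (right_ne_zero_of_mul h))
  have hmmax : ∀ y, m y ≠ 0 → maxP Q P y ≠ 0 := by
    intro y hy
    have hpos : 0 < m y := lt_of_le_of_ne (hm_nonneg y) (Ne.symm hy)
    have : ∃ x, Q' x * P x y ≠ 0 := by
      by_contra hc
      push_neg at hc
      rw [hm] at hpos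
      simp only [Finset.sum_congr rfl (fun a (_ : a ∈ Finset.univ) => hc a)] at hpos
      simp at hpos
    obtain ⟨x, hx⟩ := this
    obtain ⟨h1, h2⟩ := hterm_pos x y hx
    have := le_maxP (P := P) hQ y (hsupp x h1)
    exact (lt_of_lt_of_le h2 this).ne'
  -- step 1: bound MI termwise
  have step1 : MI Q' P ≤ ∑ x, ∑ y, (if Q' x * P x y = 0 then 0
      else Q' x * P x y * Real.log (maxP Q P y / m y)) := by
    unfold MI
    apply Finset.sum_le_sum
    intro x _
    apply Finset.sum_le_sum
    intro y _
    by_cases h : Q' x * P x y = 0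
    · rw [if_pos h, if_pos h]
    · rw [if_neg h, if_neg h]
      obtain ⟨h1, h2⟩ := hterm_pos x y h
      have hmy : 0 < m y := lt_of_lt_of_le (mul_pos h1 h2) (hm_ge x y)
      have hmax : P x y ≤ maxP Q P y := le_maxP hQ y (hsupp x h1)
      apply mul_le_mul_of_nonneg_left _ (le_of_lt (mul_pos h1 h2))
      apply Real.log_le_log (div_pos h2 hmy)
      exact div_le_div_of_nonneg_right hmax hmy.le
  -- step 2: collapse inner sums
  have step2 : ∑ x, ∑ y, (if Q' x * P x y = 0 then 0
      else Q' x * P x y * Real.log (maxP Q P y / m y))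
      = ∑ y, m y * Real.log (maxP Q P y / m y) := by
    rw [Finset.sum_comm]
    apply Finset.sum_congr rfl
    intro y _
    have : ∀ x, (if Q' x * P x y = 0 then 0
        else Q' x * P x y * Real.log (maxP Q P y / m y))
        = Q' x * P x y * Real.log (maxP Q P y / m y) := by
      intro x
      split
      · rename_i h; rw [h, zero_mul]
      · rfl
    rw [Finset.sum_congr rfl (fun x _ => this x), ← Finset.sum_mul]
  -- step 3: rewrite via rkl
  have step3 : ∀ y, m y * Real.log (maxP Q P y / m y) = - rkl (m y) (maxP Q P y) := by
    intro y
    by_cases h : m y = 0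
    · rw [h, rkl_zero, zero_mul, neg_zero]
    · unfold rkl
      rw [if_neg h, Real.log_div (hmmax y h) h, Real.log_div h (hmmax y h)]
      ring
  -- step 4: gibbs bound
  have step4 : - Real.log (S0 Q P) ≤ ∑ y, rkl (m y) (maxP Q P y) := by
    have hg := gibbs_le m (fun y => maxP Q P y / S0 Q P) hm_nonneg
      (fun y => div_nonneg (maxP_nonneg hP hQ y) hS.le)
      (fun y hy => div_ne_zero (hmmax y hy) hS.ne')
      (by rw [← Finset.sum_div]; rw [show (∑ y, maxP Q P y) = S0 Q P from rfl,
        div_self hS.ne', hm_sum])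
    have heq : ∀ y, rkl (m y) (maxP Q P y / S0 Q P)
        = rkl (m y) (maxP Q P y) + m y * Real.log (S0 Q P) :=
      fun y => rkl_div_const hS (hmmax y)
    rw [Finset.sum_congr rfl (fun y _ => heq y), Finset.sum_add_distrib,
      ← Finset.sum_mul, hm_sum, one_mul] at hg
    linarith
  calc MI Q' P ≤ ∑ y, m y * Real.log (maxP Q P y / m y) := step1.trans (le_of_eq step2)
  _ = - ∑ y, rkl (m y) (maxP Q P y) := by
      rw [Finset.sum_congr rfl (fun y _ => step3 y), Finset.sum_neg_distrib]
  _ ≤ Real.log (S0 Q P) := by linarith [step4]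

lemma capacity_le_logS0 (hP : IsChannel P) (hQ : IsPMF Q) :
    capacity P {x | 0 < Q x} ≤ Real.log (S0 Q P) := by
  apply Real.sSup_le
  · rintro c ⟨Q', hQ', hsupp, rfl⟩
    exact MI_le_logS0 hP hQ Q' hQ' (fun x hx => hsupp x hx)
  · exact Real.log_nonneg (one_le_S0 hP hQ)

/- ===== the tilted distributions ===== -/

noncomputable def gf (Q : 𝓧 → ℝ) (P : 𝓧 → 𝓨 → ℝ) (ρ : ℝ) (y : 𝓨) : ℝ :=
  ∑ x, Q x * P x y ^ (1 / (1 + ρ))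

noncomputable def Gf (Q : 𝓧 → ℝ) (P : 𝓧 → 𝓨 → ℝ) (ρ : ℝ) : ℝ :=
  ∑ y, gf Q P ρ y ^ (1 + ρ)

noncomputable def Trho (Q : 𝓧 → ℝ) (P : 𝓧 → 𝓨 → ℝ) (ρ : ℝ) (y : 𝓨) : ℝ :=
  gf Q P ρ y ^ (1 + ρ) / Gf Q P ρ

noncomputable def Wrho (Q : 𝓧 → ℝ) (P : 𝓧 → 𝓨 → ℝ) (ρ : ℝ) (y : 𝓨) (x : 𝓧) : ℝ :=
  if gf Q P ρ y = 0 then Q x else Q x * P x y ^ (1 / (1 + ρ)) / gf Q P ρ y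

noncomputable def phi (Q : 𝓧 → ℝ) (P : 𝓧 → 𝓨 → ℝ) (ρ : ℝ) : ℝ :=
  DTQr (Trho Q P ρ) (Wrho Q P ρ) Q

variable {ρ : ℝ}

lemma beta_pos (hρ : -1 < ρ) : 0 < 1 + ρ := by linarith

lemma invbeta_pos (hρ : -1 < ρ) : 0 < 1 / (1 + ρ) := by
  have := beta_pos hρ; positivity

lemma gf_nonneg (hP : IsChannel P) (hQ : IsPMF Q) (y : 𝓨) : 0 ≤ gf Q P ρ y :=
  Finset.sum_nonneg fun x _ => mul_nonneg (hQ.1 x) (Real.rpow_nonneg ((hP x).1 y) _)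

lemma gf_pos_iff (hρ : -1 < ρ) (hP : IsChannel P) (hQ : IsPMF Q) (y : 𝓨) :
    0 < gf Q P ρ y ↔ ∃ x, 0 < Q x ∧ 0 < P x y := by
  constructor
  · intro h
    by_contra hc
    have : ∀ x, Q x * P x y ^ (1 / (1 + ρ)) = 0 := by
      intro x
      rcases eq_or_lt_of_le (hQ.1 x) with h0 | h0
      · rw [← h0, zero_mul]
      · have hc2 : ¬ (0 < P x y) := fun hp => absurd ⟨x, h0, hp⟩ hc
        have : P x y = 0 := le_antisymm (le_of_not_gt hc2) ((hP x).1 y)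
        rw [this, Real.zero_rpow (invbeta_pos hρ).ne', mul_zero]
    rw [gf, Finset.sum_congr rfl (fun x _ => this x)] at h
    simp at h
  · rintro ⟨x, hx, hp⟩
    apply Finset.sum_pos' (fun a _ => mul_nonneg (hQ.1 a) (Real.rpow_nonneg ((hP a).1 y) _))
    exact ⟨x, Finset.mem_univ x, mul_pos hx (Real.rpow_pos_of_pos hp _)⟩

lemma maxP_pos_iff (hP : IsChannel P) (hQ : IsPMF Q) (y : 𝓨) :
    0 < maxP Q P y ↔ ∃ x, 0 < Q x ∧ 0 < P x y := by
  obtain ⟨x0, hx0, hPx0⟩ := exists_argmax (P := P) hQ y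
  constructor
  · intro h
    exact ⟨x0, hx0.1, hPx0 ▸ h⟩
  · rintro ⟨x, hx, hp⟩
    exact lt_of_lt_of_le hp (le_maxP hQ y hx)

lemma Gf_pos (hρ : -1 < ρ) (hP : IsChannel P) (hQ : IsPMF Q) : 0 < Gf Q P ρ := by
  obtain ⟨x, hx⟩ := exists_Qpos hQ
  have : ∃ y, 0 < P x y := by
    by_contra hc
    push_neg at hc
    have : ∀ y, P x y = 0 := fun y => le_antisymm (hc y) ((hP x).1 y)
    have h2 := (hP x).2
    rw [Finset.sum_congr rfl (fun y _ => this y)] at h2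
    simp at h2
  obtain ⟨y, hy⟩ := this
  apply Finset.sum_pos'
    (fun y' _ => Real.rpow_nonneg (gf_nonneg hP hQ y') _)
  refine ⟨y, Finset.mem_univ y, Real.rpow_pos_of_pos ?_ _⟩
  exact (gf_pos_iff hρ hP hQ y).2 ⟨x, hx, hy⟩

lemma Trho_nonneg (hρ : -1 < ρ) (hP : IsChannel P) (hQ : IsPMF Q) (y : 𝓨) :
    0 ≤ Trho Q P ρ y :=
  div_nonneg (Real.rpow_nonneg (gf_nonneg hP hQ y) _) (Gf_pos hρ hP hQ).le

lemma Trho_pmf (hρ : -1 < ρ) (hP : IsChannel P) (hQ : IsPMF Q) : IsPMF (Trho Q P ρ) := by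
  refine ⟨Trho_nonneg hρ hP hQ, ?_⟩
  unfold Trho
  rw [← Finset.sum_div]
  exact div_self (Gf_pos hρ hP hQ).ne'

lemma Trho_pos_iff (hρ : -1 < ρ) (hP : IsChannel P) (hQ : IsPMF Q) (y : 𝓨) :
    0 < Trho Q P ρ y ↔ 0 < gf Q P ρ y := by
  unfold Trho
  constructor
  · intro h
    by_contra hc
    have : gf Q P ρ y = 0 := le_antisymm (le_of_not_gt hc) (gf_nonneg hP hQ y)
    rw [this, Real.zero_rpow (beta_pos hρ).ne', zero_div] at h
    exact lt_irrefl _ h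
  · intro h
    exact div_pos (Real.rpow_pos_of_pos h _) (Gf_pos hρ hP hQ)

lemma Wrho_nonneg (hρ : -1 < ρ) (hP : IsChannel P) (hQ : IsPMF Q) (y : 𝓨) (x : 𝓧) :
    0 ≤ Wrho Q P ρ y x := by
  unfold Wrho; split
  · exact hQ.1 x
  · exact div_nonneg (mul_nonneg (hQ.1 x) (Real.rpow_nonneg ((hP x).1 y) _))
      (gf_nonneg hP hQ y)

lemma Wrho_pmf (hρ : -1 < ρ) (hP : IsChannel P) (hQ : IsPMF Q) : IsCondPMF (Wrho Q P ρ) := by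
  intro y
  refine ⟨Wrho_nonneg hρ hP hQ y, ?_⟩
  unfold Wrho
  by_cases h : gf Q P ρ y = 0
  · rw [Finset.sum_congr rfl (fun x _ => if_pos h)]
    exact hQ.2
  · rw [Finset.sum_congr rfl (fun x _ => if_neg h), ← Finset.sum_div]
    rw [show (∑ x, Q x * P x y ^ (1/(1+ρ))) = gf Q P ρ y from rfl]
    exact div_self h

lemma Wrho_pos (hρ : -1 < ρ) (hP : IsChannel P) (hQ : IsPMF Q) {y : 𝓨} {x : 𝓧}
    (hg : 0 < gf Q P ρ y) (hx : 0 < Q x) (hp : 0 < P x y) : 0 < Wrho Q P ρ y x := by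
  unfold Wrho
  rw [if_neg hg.ne']
  exact div_pos (mul_pos hx (Real.rpow_pos_of_pos hp _)) hg

lemma Wrho_zero_of_Qzero (hρ : -1 < ρ) {y : 𝓨} {x : 𝓧} (hx : Q x = 0) :
    Wrho Q P ρ y x = 0 := by
  unfold Wrho; split
  · exact hx
  · rw [hx, zero_mul, zero_div]

lemma E0_eq : E0 ρ Q P = - Real.log (Gf Q P ρ) := rfl

/- ===== the fundamental identity ===== -/

lemma ident_term (hρ : -1 < ρ) (hP : IsChannel P) (hQ : IsPMF Q) {T : 𝓨 → ℝ} {V : 𝓨 → 𝓧 → ℝ}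
    (hT : IsPMF T) (hV : IsCondPMF V)
    (hac : ∀ y x, T y * V y x ≠ 0 → Q x * P x y ≠ 0) (y : 𝓨) (x : 𝓧) :
    rkl (T y * V y x) (Q x * P x y) + ρ * rkl (T y * V y x) (T y * Q x)
      = (1+ρ) * (T y * rkl (V y x) (Wrho Q P ρ y x))
        + V y x * rkl (T y) (Trho Q P ρ y) + (T y * V y x) * E0 ρ Q P := by
  by_cases hs : T y * V y x = 0
  · rcases mul_eq_zero.mp hs with h | h
    · rw [h]
      simp [rkl_zero, zero_mul, mul_zero]
    · rw [h]
      simp [rkl_zero, zero_mul, mul_zero]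
  · have hTy : 0 < T y :=
      lt_of_le_of_ne (hT.1 y) (Ne.symm (left_ne_zero_of_mul hs))
    have hVx : 0 < V y x :=
      lt_of_le_of_ne ((hV y).1 x) (Ne.symm (right_ne_zero_of_mul hs))
    have hQP := hac y x hs
    have hQx : 0 < Q x :=
      lt_of_le_of_ne (hQ.1 x) (Ne.symm (left_ne_zero_of_mul hQP))
    have hPx : 0 < P x y :=
      lt_of_le_of_ne ((hP x).1 y) (Ne.symm (right_ne_zero_of_mul hQP))
    have hβ := beta_pos hρ
    have hβne : (1+ρ) ≠ 0 := hβ.ne'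
    have hg : 0 < gf Q P ρ y := (gf_pos_iff hρ hP hQ y).2 ⟨x, hQx, hPx⟩
    have hG := Gf_pos hρ hP hQ
    have hrp : 0 < P x y ^ (1/(1+ρ)) := Real.rpow_pos_of_pos hPx _
    have hW : Wrho Q P ρ y x = Q x * P x y ^ (1/(1+ρ)) / gf Q P ρ y := if_neg hg.ne'
    have hWpos : 0 < Wrho Q P ρ y x := Wrho_pos hρ hP hQ hg hQx hPx
    have hTrpos : 0 < Trho Q P ρ y := (Trho_pos_iff hρ hP hQ y).2 hg
    have hgb : 0 < gf Q P ρ y ^ (1+ρ) := Real.rpow_pos_of_pos hg _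
    -- log computations
    have e1 : Real.log (T y * V y x / (Q x * P x y))
        = Real.log (T y) + Real.log (V y x) - Real.log (Q x) - Real.log (P x y) := by
      rw [Real.log_div hs (mul_ne_zero hQx.ne' hPx.ne'), Real.log_mul hTy.ne' hVx.ne',
        Real.log_mul hQx.ne' hPx.ne']
      ring
    have e2 : Real.log (T y * V y x / (T y * Q x))
        = Real.log (V y x) - Real.log (Q x) := by
      rw [Real.log_div hs (mul_ne_zero hTy.ne' hQx.ne'), Real.log_mul hTy.ne' hVx.ne',
        Real.log_mul hTy.ne' hQx.ne']
      ring
    have e3 : Real.log (V y x / Wrho Q P ρ y x)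
        = Real.log (V y x) - Real.log (Q x) - (1/(1+ρ)) * Real.log (P x y)
          + Real.log (gf Q P ρ y) := by
      rw [Real.log_div hVx.ne' hWpos.ne', hW, Real.log_div (mul_ne_zero hQx.ne' hrp.ne') hg.ne',
        Real.log_mul hQx.ne' hrp.ne', Real.log_rpow hPx]
      ring
    have e4 : Real.log (T y / Trho Q P ρ y)
        = Real.log (T y) - (1+ρ) * Real.log (gf Q P ρ y) + Real.log (Gf Q P ρ) := by
      rw [Real.log_div hTy.ne' hTrpos.ne', show Trho Q P ρ y = gf Q P ρ y ^ (1+ρ) / Gf Q P ρ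
        from rfl, Real.log_div hgb.ne' hG.ne', Real.log_rpow hg]
      ring
    unfold rkl
    rw [if_neg hs, if_neg hs, if_neg hVx.ne', if_neg hTy.ne', E0_eq, e1, e2, e3, e4]
    field_simp
    ring

lemma ident (hρ : -1 < ρ) (hP : IsChannel P) (hQ : IsPMF Q) {T : 𝓨 → ℝ} {V : 𝓨 → 𝓧 → ℝ}
    (hT : IsPMF T) (hV : IsCondPMF V)
    (hac : ∀ y x, T y * V y x ≠ 0 → Q x * P x y ≠ 0) :
    DQPr T V Q P + ρ * DTQr T V Q
      = E0 ρ Q P + (1+ρ) * (∑ y, T y * (∑ x, rkl (V y x) (Wrho Q P ρ y x)))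
        + ∑ y, rkl (T y) (Trho Q P ρ y) := by
  have hsum : ∑ y, ∑ x, (rkl (T y * V y x) (Q x * P x y)
      + ρ * rkl (T y * V y x) (T y * Q x))
      = ∑ y, ∑ x, ((1+ρ) * (T y * rkl (V y x) (Wrho Q P ρ y x))
        + V y x * rkl (T y) (Trho Q P ρ y) + (T y * V y x) * E0 ρ Q P) :=
    Finset.sum_congr rfl fun y _ => Finset.sum_congr rfl fun x _ =>
      ident_term hρ hP hQ hT hV hac y x
  have lhs_eq : ∑ y, ∑ x, (rkl (T y * V y x) (Q x * P x y)
      + ρ * rkl (T y * V y x) (T y * Q x)) = DQPr T V Q P + ρ * DTQr T V Q := by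
    unfold DQPr DTQr
    rw [Finset.mul_sum]
    rw [← Finset.sum_add_distrib]
    apply Finset.sum_congr rfl
    intro y _
    rw [Finset.mul_sum, ← Finset.sum_add_distrib]
  have rhs_eq : ∑ y, ∑ x, ((1+ρ) * (T y * rkl (V y x) (Wrho Q P ρ y x))
        + V y x * rkl (T y) (Trho Q P ρ y) + (T y * V y x) * E0 ρ Q P)
      = (1+ρ) * (∑ y, T y * (∑ x, rkl (V y x) (Wrho Q P ρ y x)))
        + ∑ y, rkl (T y) (Trho Q P ρ y) + E0 ρ Q P := by
    rw [Finset.sum_congr rfl (fun y (_ : y ∈ Finset.univ) => Finset.sum_add_distrib),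
      Finset.sum_add_distrib]
    congr 1
    · rw [Finset.sum_congr rfl (fun y (_ : y ∈ Finset.univ) => Finset.sum_add_distrib),
        Finset.sum_add_distrib]
      congr 1
      · rw [Finset.mul_sum]
        apply Finset.sum_congr rfl
        intro y _
        rw [Finset.mul_sum, Finset.mul_sum]
      · apply Finset.sum_congr rfl
        intro y _
        rw [← Finset.sum_mul, (hV y).2, one_mul]
    · have : ∀ y, ∑ x, (T y * V y x) * E0 ρ Q P = T y * E0 ρ Q P := by
        intro y
        rw [← Finset.sum_mul, row_sum T hV y]
      rw [Finset.sum_congr rfl (fun y _ => this y), ← Finset.sum_mul, hT.2, one_mul]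
  rw [lhs_eq] at hsum
  rw [hsum, rhs_eq]
  ring

lemma Tpos_gfpos (hρ : -1 < ρ) (hP : IsChannel P) (hQ : IsPMF Q) {T : 𝓨 → ℝ} {V : 𝓨 → 𝓧 → ℝ}
    (hT : IsPMF T) (hV : IsCondPMF V)
    (hac : ∀ y x, T y * V y x ≠ 0 → Q x * P x y ≠ 0) {y : 𝓨} (hy : T y ≠ 0) :
    0 < gf Q P ρ y := by
  have hTy : 0 < T y := lt_of_le_of_ne (hT.1 y) (Ne.symm hy)
  have : ∃ x, V y x ≠ 0 := by
    by_contra hc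
    push_neg at hc
    have := (hV y).2
    rw [Finset.sum_congr rfl (fun x _ => hc x)] at this
    simp at this
  obtain ⟨x, hx⟩ := this
  have hs : T y * V y x ≠ 0 := mul_ne_zero hy hx
  have hQP := hac y x hs
  exact (gf_pos_iff hρ hP hQ y).2
    ⟨x, lt_of_le_of_ne (hQ.1 x) (Ne.symm (left_ne_zero_of_mul hQP)),
      lt_of_le_of_ne ((hP x).1 y) (Ne.symm (right_ne_zero_of_mul hQP))⟩

lemma Tdiv_nonneg (hρ : -1 < ρ) (hP : IsChannel P) (hQ : IsPMF Q) {T : 𝓨 → ℝ} {V : 𝓨 → 𝓧 → ℝ}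
    (hT : IsPMF T) (hV : IsCondPMF V)
    (hac : ∀ y x, T y * V y x ≠ 0 → Q x * P x y ≠ 0) :
    0 ≤ ∑ y, rkl (T y) (Trho Q P ρ y) := by
  apply gibbs_le _ _ hT.1 (Trho_nonneg hρ hP hQ)
  · intro y hy
    exact ((Trho_pos_iff hρ hP hQ y).2 (Tpos_gfpos hρ hP hQ hT hV hac hy)).ne'
  · rw [(Trho_pmf hρ hP hQ).2, hT.2]

lemma Tdiv_eq0 (hρ : -1 < ρ) (hP : IsChannel P) (hQ : IsPMF Q) {T : 𝓨 → ℝ} {V : 𝓨 → 𝓧 → ℝ}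
    (hT : IsPMF T) (hV : IsCondPMF V)
    (hac : ∀ y x, T y * V y x ≠ 0 → Q x * P x y ≠ 0)
    (h : ∑ y, rkl (T y) (Trho Q P ρ y) ≤ 0) : ∀ y, T y = Trho Q P ρ y := by
  apply gibbs_eq _ _ hT.1 (Trho_nonneg hρ hP hQ)
  · intro y hy
    exact ((Trho_pos_iff hρ hP hQ y).2 (Tpos_gfpos hρ hP hQ hT hV hac hy)).ne'
  · rw [(Trho_pmf hρ hP hQ).2, hT.2]
  · exact h

lemma Vdiv_inner_nonneg (hρ : -1 < ρ) (hP : IsChannel P) (hQ : IsPMF Q)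
    {T : 𝓨 → ℝ} {V : 𝓨 → 𝓧 → ℝ} (hT : IsPMF T) (hV : IsCondPMF V)
    (hac : ∀ y x, T y * V y x ≠ 0 → Q x * P x y ≠ 0) {y : 𝓨} (hy : T y ≠ 0) :
    0 ≤ ∑ x, rkl (V y x) (Wrho Q P ρ y x) := by
  have hg := Tpos_gfpos hρ hP hQ hT hV hac hy
  apply gibbs_le _ _ (hV y).1 (Wrho_nonneg hρ hP hQ y)
  · intro x hx
    have hQP := hac y x (mul_ne_zero hy hx)
    exact (Wrho_pos hρ hP hQ hg
      (lt_of_le_of_ne (hQ.1 x) (Ne.symm (left_ne_zero_of_mul hQP)))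
      (lt_of_le_of_ne ((hP x).1 y) (Ne.symm (right_ne_zero_of_mul hQP)))).ne'
  · rw [((Wrho_pmf hρ hP hQ) y).2, (hV y).2]

lemma Vdiv_nonneg (hρ : -1 < ρ) (hP : IsChannel P) (hQ : IsPMF Q)
    {T : 𝓨 → ℝ} {V : 𝓨 → 𝓧 → ℝ} (hT : IsPMF T) (hV : IsCondPMF V)
    (hac : ∀ y x, T y * V y x ≠ 0 → Q x * P x y ≠ 0) :
    0 ≤ ∑ y, T y * (∑ x, rkl (V y x) (Wrho Q P ρ y x)) := by
  apply Finset.sum_nonneg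
  intro y _
  by_cases hy : T y = 0
  · rw [hy, zero_mul]
  · exact mul_nonneg (hT.1 y) (Vdiv_inner_nonneg hρ hP hQ hT hV hac hy)

lemma ident_eq_case (hρ : -1 < ρ) (hP : IsChannel P) (hQ : IsPMF Q)
    {T : 𝓨 → ℝ} {V : 𝓨 → 𝓧 → ℝ} (hT : IsPMF T) (hV : IsCondPMF V)
    (hac : ∀ y x, T y * V y x ≠ 0 → Q x * P x y ≠ 0)
    (h : (1+ρ) * (∑ y, T y * (∑ x, rkl (V y x) (Wrho Q P ρ y x)))
        + ∑ y, rkl (T y) (Trho Q P ρ y) ≤ 0) :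
    ∀ x y, T y * V y x = Trho Q P ρ y * Wrho Q P ρ y x := by
  have hβ := beta_pos hρ
  have h1 := Vdiv_nonneg hρ hP hQ hT hV hac
  have h2 := Tdiv_nonneg hρ hP hQ hT hV hac
  have hVd : ∑ y, T y * (∑ x, rkl (V y x) (Wrho Q P ρ y x)) ≤ 0 := by nlinarith
  have hTd : ∑ y, rkl (T y) (Trho Q P ρ y) ≤ 0 := by nlinarith
  have hTeq := Tdiv_eq0 hρ hP hQ hT hV hac hTd
  intro x y
  by_cases hy : T y = 0
  · rw [hy, ← hTeq y, hy, zero_mul, zero_mul]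
  · have hTy : 0 < T y := lt_of_le_of_ne (hT.1 y) (Ne.symm hy)
    -- each summand of hVd is nonneg, so each is zero
    have hterm : ∀ y', 0 ≤ T y' * (∑ x, rkl (V y' x) (Wrho Q P ρ y' x)) := by
      intro y'
      by_cases hy' : T y' = 0
      · rw [hy', zero_mul]
      · exact mul_nonneg (hT.1 y') (Vdiv_inner_nonneg hρ hP hQ hT hV hac hy')
    have hzero : T y * (∑ x, rkl (V y x) (Wrho Q P ρ y x)) = 0 := by
      have hsum0 : ∑ y', T y' * (∑ x, rkl (V y' x) (Wrho Q P ρ y' x)) = 0 :=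
        le_antisymm hVd (Finset.sum_nonneg fun y' _ => hterm y')
      exact (Finset.sum_eq_zero_iff_of_nonneg (fun y' _ => hterm y')).mp hsum0 y
        (Finset.mem_univ y)
    have hinner : ∑ x', rkl (V y x') (Wrho Q P ρ y x') ≤ 0 :=
      le_of_eq ((mul_eq_zero.mp hzero).resolve_left hy)
    have hg := Tpos_gfpos hρ hP hQ hT hV hac hy
    have hVeq : ∀ x', V y x' = Wrho Q P ρ y x' := by
      apply gibbs_eq _ _ (hV y).1 (Wrho_nonneg hρ hP hQ y) _ _ hinner
      · intro x' hx'
        have hQP := hac y x' (mul_ne_zero hy hx')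
        exact (Wrho_pos hρ hP hQ hg
          (lt_of_le_of_ne (hQ.1 x') (Ne.symm (left_ne_zero_of_mul hQP)))
          (lt_of_le_of_ne ((hP x').1 y) (Ne.symm (right_ne_zero_of_mul hQP)))).ne'
      · rw [((Wrho_pmf hρ hP hQ) y).2, (hV y).2]
    rw [hTeq y, hVeq x]

/- ===== candidate optimality ===== -/

lemma cand_ac (hρ : -1 < ρ) (hP : IsChannel P) (hQ : IsPMF Q) :
    ∀ y x, Trho Q P ρ y * Wrho Q P ρ y x ≠ 0 → Q x * P x y ≠ 0 := by
  intro y x hs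
  have hT : Trho Q P ρ y ≠ 0 := left_ne_zero_of_mul hs
  have hW : Wrho Q P ρ y x ≠ 0 := right_ne_zero_of_mul hs
  have hg : 0 < gf Q P ρ y := by
    rcases lt_of_le_of_ne (Trho_nonneg hρ hP hQ y) (Ne.symm hT) with h
    exact (Trho_pos_iff hρ hP hQ y).1 h
  rw [show Wrho Q P ρ y x = Q x * P x y ^ (1/(1+ρ)) / gf Q P ρ y from if_neg hg.ne'] at hW
  have hQx : Q x ≠ 0 := by
    intro h; apply hW; rw [h, zero_mul, zero_div]
  have hPx : P x y ≠ 0 := by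
    intro h; apply hW; rw [h, Real.zero_rpow (invbeta_pos hρ).ne', mul_zero, zero_div]
  exact mul_ne_zero hQx hPx

lemma cand_acT (hρ : -1 < ρ) (hP : IsChannel P) (hQ : IsPMF Q) :
    ∀ y x, Trho Q P ρ y * Wrho Q P ρ y x ≠ 0 → Trho Q P ρ y * Q x ≠ 0 := by
  intro y x hs
  have hQP := cand_ac hρ hP hQ y x hs
  exact mul_ne_zero (left_ne_zero_of_mul hs) (left_ne_zero_of_mul hQP)

lemma cand_ident (hρ : -1 < ρ) (hP : IsChannel P) (hQ : IsPMF Q) :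
    DQPr (Trho Q P ρ) (Wrho Q P ρ) Q P = E0 ρ Q P - ρ * phi Q P ρ := by
  have h := ident hρ hP hQ (Trho_pmf hρ hP hQ) (Wrho_pmf hρ hP hQ) (cand_ac hρ hP hQ)
  rw [Finset.sum_congr rfl (fun y (_ : y ∈ Finset.univ) =>
      by rw [Finset.sum_congr rfl (fun x (_ : x ∈ Finset.univ) => rkl_self _), Finset.sum_const_zero, mul_zero]),
    Finset.sum_const_zero, mul_zero, add_zero,
    Finset.sum_congr rfl (fun y (_ : y ∈ Finset.univ) => rkl_self _), Finset.sum_const_zero,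
    add_zero] at h
  have h2 : DTQr (Trho Q P ρ) (Wrho Q P ρ) Q = phi Q P ρ := rfl
  rw [h2] at h
  linarith

lemma cand_DTQ (hρ : -1 < ρ) (hP : IsChannel P) (hQ : IsPMF Q) :
    DTQ (Trho Q P ρ) (Wrho Q P ρ) Q = ((phi Q P ρ : ℝ) : EReal) :=
  DTQ_eq_coe _ _ _ (cand_acT hρ hP hQ)

lemma cand_DQP (hρ : -1 < ρ) (hP : IsChannel P) (hQ : IsPMF Q) :
    DQP (Trho Q P ρ) (Wrho Q P ρ) Q P = ((E0 ρ Q P - ρ * phi Q P ρ : ℝ) : EReal) := by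
  rw [DQP_eq_coe _ _ _ _ (cand_ac hρ hP hQ), cand_ident hρ hP hQ]

lemma coe_max0 (a : ℝ) : max ((a : ℝ) : EReal) 0 = ((max a 0 : ℝ) : EReal) := by
  rcases le_total a 0 with h | h
  · rw [max_eq_right (α := EReal) (by exact_mod_cast h), max_eq_right h]; rfl
  · rw [max_eq_left (α := EReal) (by exact_mod_cast h), max_eq_left h]

lemma max_ne_bot (a : EReal) : max a 0 ≠ ⊥ :=
  fun h => absurd ((le_max_right a 0).trans_eq h) (by simp)

lemma value_lb (hρ : -1 < ρ) (hρ0 : ρ ≤ 0) (hP : IsChannel P) (hQ : IsPMF Q) (R : ℝ)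
    {T : 𝓨 → ℝ} {V : 𝓨 → 𝓧 → ℝ} (hT : IsPMF T) (hV : IsCondPMF V) :
    ((E0 ρ Q P - ρ * R : ℝ) : EReal) ≤ DQP T V Q P + max ((R : EReal) - DTQ T V Q) 0 := by
  by_cases hac : ∀ y x, T y * V y x ≠ 0 → Q x * P x y ≠ 0
  · have hacT : ∀ y x, T y * V y x ≠ 0 → T y * Q x ≠ 0 := fun y x hs =>
      mul_ne_zero (left_ne_zero_of_mul hs) (left_ne_zero_of_mul (hac y x hs))
    rw [DQP_eq_coe _ _ _ _ hac, DTQ_eq_coe _ _ _ hacT]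
    rw [show ((R : EReal) - ((DTQr T V Q : ℝ) : EReal)) = ((R - DTQr T V Q : ℝ) : EReal)
      from by rw [EReal.coe_sub], coe_max0, ← EReal.coe_add, EReal.coe_le_coe_iff]
    set d1 := DQPr T V Q P
    set d2 := DTQr T V Q
    have hid := ident hρ hP hQ hT hV hac
    have hVd := Vdiv_nonneg hρ hP hQ hT hV hac
    have hTd := Tdiv_nonneg hρ hP hQ hT hV hac
    have hβ := beta_pos hρ
    have hmax : -ρ * (R - d2) ≤ max (R - d2) 0 := by
      rcases le_total (R - d2) 0 with h | h
      · exact le_trans (mul_nonpos_of_nonneg_of_nonpos (by linarith) h) (le_max_right _ _)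
      · exact le_trans (by nlinarith) (le_max_left _ _)
    nlinarith [mul_nonneg (le_of_lt hβ) hVd]
  · push_neg at hac
    obtain ⟨y, x, hs, hqp⟩ := hac
    have : DQP T V Q P = ⊤ := sum2_klTerm_top _ _ y x hs hqp
    rw [this, EReal.top_add_of_ne_bot (max_ne_bot _)]
    exact le_top

lemma value_uniq (hρ : -1 < ρ) (hρ0 : ρ ≤ 0) (hP : IsChannel P) (hQ : IsPMF Q) (R : ℝ)
    {T : 𝓨 → ℝ} {V : 𝓨 → 𝓧 → ℝ} (hT : IsPMF T) (hV : IsCondPMF V)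
    (hval : DQP T V Q P + max ((R : EReal) - DTQ T V Q) 0 = ((E0 ρ Q P - ρ * R : ℝ) : EReal)) :
    ∀ x y, T y * V y x = Trho Q P ρ y * Wrho Q P ρ y x := by
  have hac : ∀ y x, T y * V y x ≠ 0 → Q x * P x y ≠ 0 := by
    by_contra hc
    push_neg at hc
    obtain ⟨y, x, hs, hqp⟩ := hc
    have : DQP T V Q P = ⊤ := sum2_klTerm_top _ _ y x hs hqp
    rw [this, EReal.top_add_of_ne_bot (max_ne_bot _)] at hval
    exact absurd hval.symm (EReal.coe_ne_top _)
  have hacT : ∀ y x, T y * V y x ≠ 0 → T y * Q x ≠ 0 := fun y x hs =>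
    mul_ne_zero (left_ne_zero_of_mul hs) (left_ne_zero_of_mul (hac y x hs))
  rw [DQP_eq_coe _ _ _ _ hac, DTQ_eq_coe _ _ _ hacT,
    show ((R : EReal) - ((DTQr T V Q : ℝ) : EReal)) = ((R - DTQr T V Q : ℝ) : EReal)
      from by rw [EReal.coe_sub], coe_max0, ← EReal.coe_add, EReal.coe_eq_coe_iff] at hval
  set d1 := DQPr T V Q P
  set d2 := DTQr T V Q
  have hid := ident hρ hP hQ hT hV hac
  have hVd := Vdiv_nonneg hρ hP hQ hT hV hac
  have hTd := Tdiv_nonneg hρ hP hQ hT hV hac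
  have hβ := beta_pos hρ
  have hmax : -ρ * (R - d2) ≤ max (R - d2) 0 := by
    rcases le_total (R - d2) 0 with h | h
    · exact le_trans (mul_nonpos_of_nonneg_of_nonpos (by linarith) h) (le_max_right _ _)
    · exact le_trans (by nlinarith) (le_max_left _ _)
  apply ident_eq_case hρ hP hQ hT hV hac
  nlinarith [mul_nonneg (le_of_lt hβ) hVd]

lemma cand_supp (hρ : -1 < ρ) (hP : IsChannel P) (hQ : IsPMF Q) :
    ∀ x, (0 < ∑ y, Trho Q P ρ y * Wrho Q P ρ y x) ↔ 0 < Q x := by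
  intro x
  constructor
  · intro h
    by_contra hc
    have hQx : Q x = 0 := le_antisymm (le_of_not_gt hc) (hQ.1 x)
    have : ∀ y, Trho Q P ρ y * Wrho Q P ρ y x = 0 := fun y => by
      rw [Wrho_zero_of_Qzero hρ hQx, mul_zero]
    rw [Finset.sum_congr rfl (fun y _ => this y)] at h
    simp at h
  · intro hQx
    have : ∃ y, 0 < P x y := by
      by_contra hc
      push_neg at hc
      have : ∀ y, P x y = 0 := fun y => le_antisymm (hc y) ((hP x).1 y)
      have h2 := (hP x).2
      rw [Finset.sum_congr rfl (fun y _ => this y)] at h2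
      simp at h2
    obtain ⟨y, hy⟩ := this
    have hg : 0 < gf Q P ρ y := (gf_pos_iff hρ hP hQ y).2 ⟨x, hQx, hy⟩
    apply Finset.sum_pos'
    · intro y' _
      exact mul_nonneg (Trho_nonneg hρ hP hQ y') (Wrho_nonneg hρ hP hQ y' x)
    · exact ⟨y, Finset.mem_univ y, mul_pos ((Trho_pos_iff hρ hP hQ y).2 hg)
        (Wrho_pos hρ hP hQ hg hQx hy)⟩

/- ===== phi at rho = 0 and MI ===== -/

lemma MI_flip : MI Q P = ∑ y, ∑ x, (if Q x * P x y = 0 then 0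
    else Q x * P x y * Real.log (P x y / ∑ a, Q a * P a y)) := Finset.sum_comm

lemma rkl_MI_term (hP : IsChannel P) (hQ : IsPMF Q) (y : 𝓨) (x : 𝓧) :
    rkl (Q x * P x y) ((∑ a, Q a * P a y) * Q x)
      = (if Q x * P x y = 0 then 0 else Q x * P x y * Real.log (P x y / ∑ a, Q a * P a y)) := by
  by_cases h : Q x * P x y = 0
  · rw [if_pos h, h, rkl_zero]
  · rw [if_neg h]
    have hQx : 0 < Q x := lt_of_le_of_ne (hQ.1 x) (Ne.symm (left_ne_zero_of_mul h))
    have hPx : 0 < P x y := lt_of_le_of_ne ((hP x).1 y) (Ne.symm (right_ne_zero_of_mul h))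
    have hm : 0 < ∑ a, Q a * P a y :=
      lt_of_lt_of_le (mul_pos hQx hPx)
        (Finset.single_le_sum (fun a _ => mul_nonneg (hQ.1 a) ((hP a).1 y)) (Finset.mem_univ x))
    unfold rkl
    rw [if_neg h]
    congr 1
    rw [show Q x * P x y / ((∑ a, Q a * P a y) * Q x) = P x y / ∑ a, Q a * P a y from by
      field_simp]

lemma DTQr_joint_QP (hP : IsChannel P) (hQ : IsPMF Q) {T : 𝓨 → ℝ} {V : 𝓨 → 𝓧 → ℝ}
    (hV : IsCondPMF V) (hjoint : ∀ y x, T y * V y x = Q x * P x y) :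
    DTQr T V Q = MI Q P := by
  have hTm : ∀ y, T y = ∑ a, Q a * P a y := by
    intro y
    rw [← row_sum T hV y, Finset.sum_congr rfl (fun x _ => hjoint y x)]
  rw [MI_flip]
  unfold DTQr
  apply Finset.sum_congr rfl
  intro y _
  apply Finset.sum_congr rfl
  intro x _
  rw [hjoint y x, hTm y, rkl_MI_term hP hQ y x]

lemma phi_zero (hP : IsChannel P) (hQ : IsPMF Q) : phi Q P 0 = MI Q P := by
  have hgf : ∀ y, gf Q P 0 y = ∑ a, Q a * P a y := by
    intro y
    unfold gf
    apply Finset.sum_congr rfl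
    intro x _
    norm_num
  have hGf : Gf Q P 0 = 1 := by
    unfold Gf
    rw [Finset.sum_congr rfl (fun y (_ : y ∈ Finset.univ) => by
      rw [hgf y, show (1:ℝ) + 0 = 1 from by norm_num, Real.rpow_one])]
    exact sumQP_one hP hQ
  have hTr : ∀ y, Trho Q P 0 y = ∑ a, Q a * P a y := by
    intro y
    unfold Trho
    rw [hGf, div_one, hgf y, show (1:ℝ) + 0 = 1 from by norm_num, Real.rpow_one]
  have hjoint : ∀ y x, Trho Q P 0 y * Wrho Q P 0 y x = Q x * P x y := by
    intro y x
    unfold Wrho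
    rw [hgf y]
    split
    · rename_i h
      rw [hTr y, h, zero_mul]
      have hle : Q x * P x y ≤ ∑ a, Q a * P a y :=
        Finset.single_le_sum (fun a _ => mul_nonneg (hQ.1 a) ((hP a).1 y)) (Finset.mem_univ x)
      have hge : 0 ≤ Q x * P x y := mul_nonneg (hQ.1 x) ((hP x).1 y)
      rw [h] at hle
      linarith
    · rename_i h
      rw [hTr y, show (1:ℝ)/(1+0) = 1 from by norm_num, Real.rpow_one]
      field_simp
  unfold phi
  rw [DTQr_joint_QP hP hQ (Wrho_pmf (by norm_num) hP hQ) hjoint]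

/- ===== existence of the optimal rho ===== -/

/- ===== packaged optimality ===== -/

lemma opt_package (hρ : -1 < ρ) (hρ0 : ρ ≤ 0) (hP : IsChannel P) (hQ : IsPMF Q) (R : ℝ)
    (hRle : R ≤ phi Q P ρ) (hmul : ρ * (phi Q P ρ - R) = 0) :
    ∃ T : 𝓨 → ℝ, ∃ V : 𝓨 → 𝓧 → ℝ, ∃ d1 d2 : ℝ, IsPMF T ∧ IsCondPMF V ∧
      DQP T V Q P = (d1 : EReal) ∧ DTQ T V Q = (d2 : EReal) ∧ R ≤ d2 ∧
      (∀ T' V', IsPMF T' → IsCondPMF V' →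
        (d1 : EReal) ≤ DQP T' V' Q P + max ((R : EReal) - DTQ T' V' Q) 0) ∧
      (∀ T' V', IsPMF T' → IsCondPMF V' →
        DQP T' V' Q P + max ((R : EReal) - DTQ T' V' Q) 0 = (d1 : EReal) →
        ∀ x y, T' y * V' y x = T y * V y x) ∧
      (∀ x, (0 < ∑ y, T y * V y x) ↔ 0 < Q x) := by
  have hkey : E0 ρ Q P - ρ * R = E0 ρ Q P - ρ * phi Q P ρ := by
    have : ρ * R = ρ * phi Q P ρ := by linear_combination - hmul
    linarith
  refine ⟨Trho Q P ρ, Wrho Q P ρ, E0 ρ Q P - ρ * phi Q P ρ, phi Q P ρ,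
    Trho_pmf hρ hP hQ, Wrho_pmf hρ hP hQ, cand_DQP hρ hP hQ, cand_DTQ hρ hP hQ, hRle,
    ?_, ?_, cand_supp hρ hP hQ⟩
  · intro T' V' hT' hV'
    have := value_lb hρ hρ0 hP hQ R hT' hV'
    rwa [hkey] at this
  · intro T' V' hT' hV' hval
    exact value_uniq hρ hρ0 hP hQ R hT' hV' (by rw [hval, hkey])

/- ===== continuity of phi on (-1, infty) ===== -/

lemma contOn_inv1 : ContinuousOn (fun ρ : ℝ => 1 / (1 + ρ)) (Ioi (-1)) :=
  continuousOn_const.div ((continuous_const.add continuous_id).continuousOn)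
    (fun ρ hρ => (beta_pos hρ).ne')

lemma contOn_gf (hP : IsChannel P) (hQ : IsPMF Q) (y : 𝓨) :
    ContinuousOn (fun ρ => gf Q P ρ y) (Ioi (-1)) := by
  unfold gf
  apply continuousOn_finset_sum
  intro x _
  exact continuousOn_const.mul (ContinuousOn.rpow continuousOn_const contOn_inv1
    (fun ρ hρ => Or.inr (invbeta_pos hρ)))

lemma contOn_gfb (hP : IsChannel P) (hQ : IsPMF Q) (y : 𝓨) :
    ContinuousOn (fun ρ => gf Q P ρ y ^ (1 + ρ)) (Ioi (-1)) :=
  ContinuousOn.rpow (contOn_gf hP hQ y) ((continuous_const.add continuous_id).continuousOn)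
    (fun ρ hρ => Or.inr (beta_pos hρ))

lemma contOn_Gf (hP : IsChannel P) (hQ : IsPMF Q) :
    ContinuousOn (fun ρ => Gf Q P ρ) (Ioi (-1)) := by
  unfold Gf
  exact continuousOn_finset_sum _ (fun y _ => contOn_gfb hP hQ y)

lemma contOn_Trho (hP : IsChannel P) (hQ : IsPMF Q) (y : 𝓨) :
    ContinuousOn (fun ρ => Trho Q P ρ y) (Ioi (-1)) :=
  (contOn_gfb hP hQ y).div (contOn_Gf hP hQ) (fun ρ hρ => (Gf_pos hρ hP hQ).ne')

lemma contOn_phi (hP : IsChannel P) (hQ : IsPMF Q) :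
    ContinuousOn (phi Q P) (Ioi (-1)) := by
  unfold phi DTQr
  apply continuousOn_finset_sum
  intro y _
  apply continuousOn_finset_sum
  intro x _
  by_cases hy : ∃ x', 0 < Q x' ∧ 0 < P x' y
  · by_cases hQx : Q x = 0
    · apply ContinuousOn.congr (continuousOn_const (c := (0:ℝ)))
      intro ρ hρ
      show rkl (Trho Q P ρ y * Wrho Q P ρ y x) (Trho Q P ρ y * Q x) = 0
      rw [Wrho_zero_of_Qzero hρ hQx, mul_zero, rkl_zero]
    · have hQx' : 0 < Q x := lt_of_le_of_ne (hQ.1 x) (Ne.symm hQx)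
      by_cases hPx : P x y = 0
      · apply ContinuousOn.congr (continuousOn_const (c := (0:ℝ)))
        intro ρ hρ
        show rkl (Trho Q P ρ y * Wrho Q P ρ y x) (Trho Q P ρ y * Q x) = 0
        have hg : 0 < gf Q P ρ y := (gf_pos_iff hρ hP hQ y).2 hy
        rw [show Wrho Q P ρ y x = Q x * P x y ^ (1/(1+ρ)) / gf Q P ρ y from if_neg hg.ne',
          hPx, Real.zero_rpow (invbeta_pos hρ).ne', mul_zero, zero_div, mul_zero, rkl_zero]
      · have hPx' : 0 < P x y := lt_of_le_of_ne ((hP x).1 y) (Ne.symm hPx)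
        have hs : ∀ ρ ∈ Ioi (-1:ℝ), 0 < Trho Q P ρ y * Wrho Q P ρ y x := by
          intro ρ hρ
          have hg : 0 < gf Q P ρ y := (gf_pos_iff hρ hP hQ y).2 hy
          exact mul_pos ((Trho_pos_iff hρ hP hQ y).2 hg) (Wrho_pos hρ hP hQ hg hQx' hPx')
        have ht : ∀ ρ ∈ Ioi (-1:ℝ), 0 < Trho Q P ρ y * Q x := by
          intro ρ hρ
          have hg : 0 < gf Q P ρ y := (gf_pos_iff hρ hP hQ y).2 hy
          exact mul_pos ((Trho_pos_iff hρ hP hQ y).2 hg) hQx'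
        have hWc : ContinuousOn (fun ρ => Wrho Q P ρ y x) (Ioi (-1)) := by
          apply ContinuousOn.congr ((continuousOn_const.mul (ContinuousOn.rpow
            continuousOn_const contOn_inv1 (fun ρ hρ => Or.inr (invbeta_pos hρ)))).div
            (contOn_gf hP hQ y) (fun ρ hρ => ((gf_pos_iff hρ hP hQ y).2 hy).ne'))
          intro ρ hρ
          exact if_neg ((gf_pos_iff hρ hP hQ y).2 hy).ne'
        have hsc : ContinuousOn (fun ρ => Trho Q P ρ y * Wrho Q P ρ y x) (Ioi (-1)) :=
          (contOn_Trho hP hQ y).mul hWc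
        have htc : ContinuousOn (fun ρ => Trho Q P ρ y * Q x) (Ioi (-1)) :=
          (contOn_Trho hP hQ y).mul continuousOn_const
        apply ContinuousOn.congr (f := fun ρ =>
          (Trho Q P ρ y * Wrho Q P ρ y x) * Real.log
            ((Trho Q P ρ y * Wrho Q P ρ y x) / (Trho Q P ρ y * Q x)))
        · exact hsc.mul ((hsc.div htc (fun ρ hρ => (ht ρ hρ).ne')).log
            (fun ρ hρ => (div_pos (hs ρ hρ) (ht ρ hρ)).ne'))
        · intro ρ hρ
          show rkl (Trho Q P ρ y * Wrho Q P ρ y x) (Trho Q P ρ y * Q x)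
            = Trho Q P ρ y * Wrho Q P ρ y x
              * Real.log (Trho Q P ρ y * Wrho Q P ρ y x / (Trho Q P ρ y * Q x))
          unfold rkl
          rw [if_neg (hs ρ hρ).ne']
  · apply ContinuousOn.congr (continuousOn_const (c := (0:ℝ)))
    intro ρ hρ
    show rkl (Trho Q P ρ y * Wrho Q P ρ y x) (Trho Q P ρ y * Q x) = 0
    have hg : gf Q P ρ y = 0 := by
      by_contra h
      exact hy ((gf_pos_iff hρ hP hQ y).1
        (lt_of_le_of_ne (gf_nonneg hP hQ y) (Ne.symm h)))
    have : Trho Q P ρ y = 0 := by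
      unfold Trho
      rw [hg, Real.zero_rpow (beta_pos hρ).ne', zero_div]
    rw [this, zero_mul, rkl_zero]

/- ===== limits as rho -> -1+ ===== -/

lemma tendsto_beta0 : Tendsto (fun ρ : ℝ => 1 + ρ) (𝓝[>] (-1:ℝ)) (𝓝[>] (0:ℝ)) := by
  rw [tendsto_nhdsWithin_iff]
  constructor
  · have hcont : Continuous (fun ρ : ℝ => 1 + ρ) := continuous_const.add continuous_id
    have h := hcont.tendsto (-1 : ℝ)
    norm_num at h
    exact h.mono_left nhdsWithin_le_nhds
  · exact eventually_mem_nhdsWithin.mono (fun ρ hρ => by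
      simp only [Set.mem_Ioi] at *
      linarith)

lemma tendsto_invb : Tendsto (fun ρ : ℝ => 1 / (1 + ρ)) (𝓝[>] (-1:ℝ)) atTop := by
  have := tendsto_inv_nhdsGT_zero.comp tendsto_beta0
  simpa [one_div, Function.comp_def] using this

lemma tendsto_rpow_ratio {r : ℝ} (h0 : 0 ≤ r) (h1 : r < 1) :
    Tendsto (fun ρ : ℝ => r ^ (1 / (1 + ρ))) (𝓝[>] (-1:ℝ)) (𝓝 0) := by
  rcases eq_or_lt_of_le h0 with h | h
  · apply Tendsto.congr' _ tendsto_const_nhds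
    exact eventually_mem_nhdsWithin.mono (fun ρ hρ => by
      show (0:ℝ) = r ^ (1 / (1 + ρ))
      rw [← h, Real.zero_rpow (invbeta_pos hρ).ne'])
  · have hlog : Real.log r < 0 := Real.log_neg h h1
    have h2 : Tendsto (fun ρ : ℝ => Real.log r * (1 / (1 + ρ))) (𝓝[>] (-1:ℝ)) atBot := by
      have := Tendsto.atTop_mul_const_of_neg hlog tendsto_invb
      simpa [mul_comm] using this
    have h3 := Real.tendsto_exp_atBot.comp h2
    apply h3.congr
    intro ρ
    simp only [Function.comp]
    rw [Real.rpow_def_of_pos h]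

lemma tendsto_const_rpow_beta {q : ℝ} (hq : 0 < q) :
    Tendsto (fun ρ : ℝ => q ^ (1 + ρ)) (𝓝[>] (-1:ℝ)) (𝓝 1) := by
  have hb : Tendsto (fun ρ : ℝ => 1 + ρ) (𝓝[>] (-1:ℝ)) (𝓝 0) :=
    (tendsto_nhdsWithin_iff.mp tendsto_beta0).1
  have h2 : Tendsto (fun ρ : ℝ => Real.log q * (1 + ρ)) (𝓝[>] (-1:ℝ)) (𝓝 0) := by
    have := hb.const_mul (Real.log q)
    simpa using this
  have h3 := (Real.continuous_exp.tendsto 0).comp h2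
  rw [Real.exp_zero] at h3
  apply h3.congr
  intro ρ
  simp only [Function.comp]
  rw [Real.rpow_def_of_pos hq]

lemma maxP_eq_zero (hP : IsChannel P) (hQ : IsPMF Q) {y : 𝓨}
    (h : ¬ ∃ x, 0 < Q x ∧ 0 < P x y) : maxP Q P y = 0 := by
  by_contra h2
  exact h ((maxP_pos_iff hP hQ y).1
    (lt_of_le_of_ne (maxP_nonneg hP hQ y) (Ne.symm h2)))

lemma gf_eq_zero (hρ : -1 < ρ) (hP : IsChannel P) (hQ : IsPMF Q) {y : 𝓨}
    (h : ¬ ∃ x, 0 < Q x ∧ 0 < P x y) : gf Q P ρ y = 0 := by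
  by_contra h2
  exact h ((gf_pos_iff hρ hP hQ y).1
    (lt_of_le_of_ne (gf_nonneg hP hQ y) (Ne.symm h2)))

lemma tendsto_gfpow (hP : IsChannel P) (hQ : IsPMF Q) (y : 𝓨) :
    Tendsto (fun ρ => gf Q P ρ y ^ (1 + ρ)) (𝓝[>] (-1:ℝ)) (𝓝 (maxP Q P y)) := by
  by_cases hy : ∃ x, 0 < Q x ∧ 0 < P x y
  · have hM : 0 < maxP Q P y := (maxP_pos_iff hP hQ y).2 hy
    obtain ⟨x0, hx0, hPx0⟩ := exists_argmax (P := P) hQ y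
    -- squeeze between (Q x0)^(1+ρ) * M and M
    have hlo : ∀ ρ ∈ Ioi (-1:ℝ), Q x0 ^ (1+ρ) * maxP Q P y ≤ gf Q P ρ y ^ (1+ρ) := by
      intro ρ hρ
      have hβ := beta_pos hρ
      have h1 : Q x0 * maxP Q P y ^ (1/(1+ρ)) ≤ gf Q P ρ y := by
        rw [← hPx0]
        exact Finset.single_le_sum
          (fun a _ => mul_nonneg (hQ.1 a) (Real.rpow_nonneg ((hP a).1 y) _))
          (Finset.mem_univ x0)
      have h2 := Real.rpow_le_rpow
        (mul_nonneg hx0.1.le (Real.rpow_nonneg hM.le _)) h1 hβ.le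
      rw [Real.mul_rpow hx0.1.le (Real.rpow_nonneg hM.le _), ← Real.rpow_mul hM.le,
        one_div, inv_mul_cancel₀ hβ.ne', Real.rpow_one] at h2
      exact h2
    have hhi : ∀ ρ ∈ Ioi (-1:ℝ), gf Q P ρ y ^ (1+ρ) ≤ maxP Q P y := by
      intro ρ hρ
      have hβ := beta_pos hρ
      have h1 : gf Q P ρ y ≤ maxP Q P y ^ (1/(1+ρ)) := by
        have hstep : gf Q P ρ y ≤ ∑ x, Q x * maxP Q P y ^ (1/(1+ρ)) := by
          unfold gf
          apply Finset.sum_le_sum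
          intro a _
          rcases eq_or_lt_of_le (hQ.1 a) with h | h
          · rw [← h, zero_mul, zero_mul]
          · exact mul_le_mul_of_nonneg_left
              (Real.rpow_le_rpow ((hP a).1 y) (le_maxP hQ y h) (invbeta_pos hρ).le) h.le
        rwa [← Finset.sum_mul, hQ.2, one_mul] at hstep
      have h2 := Real.rpow_le_rpow (gf_nonneg hP hQ y) h1 hβ.le
      rwa [← Real.rpow_mul hM.le, one_div, inv_mul_cancel₀ hβ.ne', Real.rpow_one] at h2
    have hlo_t : Tendsto (fun ρ => Q x0 ^ (1+ρ) * maxP Q P y) (𝓝[>] (-1:ℝ))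
        (𝓝 (maxP Q P y)) := by
      have := (tendsto_const_rpow_beta hx0.1).mul_const (maxP Q P y)
      simpa using this
    apply tendsto_of_tendsto_of_tendsto_of_le_of_le' hlo_t tendsto_const_nhds
    · exact eventually_mem_nhdsWithin.mono (fun ρ hρ => hlo ρ hρ)
    · exact eventually_mem_nhdsWithin.mono (fun ρ hρ => hhi ρ hρ)
  · apply Tendsto.congr' _ tendsto_const_nhds
    · apply eventually_mem_nhdsWithin.mono
      intro ρ hρ
      show (maxP Q P y : ℝ) = gf Q P ρ y ^ (1 + ρ)
      rw [maxP_eq_zero hP hQ hy, gf_eq_zero hρ hP hQ hy,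
        Real.zero_rpow (beta_pos hρ).ne']

lemma argmax_iff (hQ : IsPMF Q) {y : 𝓨} {a : 𝓧} (ha : 0 < Q a) :
    isArgmax Q P y a ↔ P a y = maxP Q P y :=
  ⟨isArgmax_maxP hQ, fun h => ⟨ha, fun b hb => h ▸ le_maxP hQ y hb⟩⟩

lemma tendsto_Gf (hP : IsChannel P) (hQ : IsPMF Q) :
    Tendsto (fun ρ => Gf Q P ρ) (𝓝[>] (-1:ℝ)) (𝓝 (S0 Q P)) := by
  unfold Gf S0
  exact tendsto_finset_sum _ (fun y _ => tendsto_gfpow hP hQ y)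

lemma tendsto_Trho (hP : IsChannel P) (hQ : IsPMF Q) (y : 𝓨) :
    Tendsto (fun ρ => Trho Q P ρ y) (𝓝[>] (-1:ℝ)) (𝓝 (Tm1 Q P y)) := by
  unfold Trho
  rw [Tm1_eq]
  exact (tendsto_gfpow hP hQ y).div (tendsto_Gf hP hQ) (S0_pos hP hQ).ne'

lemma tendsto_W (hP : IsChannel P) (hQ : IsPMF Q) {y : 𝓨} {x : 𝓧}
    (hy : ∃ x', 0 < Q x' ∧ 0 < P x' y) (hQx : 0 < Q x) (hPx : 0 < P x y) :
    Tendsto (fun ρ => Wrho Q P ρ y x) (𝓝[>] (-1:ℝ)) (𝓝 (Vstar Q P y x)) := by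
  classical
  have hM : 0 < maxP Q P y := (maxP_pos_iff hP hQ y).2 hy
  set M := maxP Q P y with hMdef
  set gfN : ℝ → ℝ := fun ρ => ∑ a, Q a * (P a y / M) ^ (1/(1+ρ)) with hgfNdef
  have hgfN : Tendsto gfN (𝓝[>] (-1:ℝ)) (𝓝 (QA Q P y)) := by
    unfold QA
    apply tendsto_finset_sum
    intro a _
    rcases eq_or_lt_of_le (hQ.1 a) with h | h
    · have hzero : (fun ρ : ℝ => Q a * (P a y / M) ^ (1/(1+ρ))) = fun _ => 0 := by
        funext ρ
        rw [← h, zero_mul]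
      rw [hzero, if_neg (fun hc => absurd hc.1 (by rw [← h]; exact lt_irrefl 0))]
      exact tendsto_const_nhds
    · by_cases hPM : P a y = M
      · have hone : (fun ρ : ℝ => Q a * (P a y / M) ^ (1/(1+ρ))) = fun _ => Q a := by
          funext ρ
          rw [hPM, div_self hM.ne', Real.one_rpow, mul_one]
        rw [hone, if_pos ((argmax_iff hQ h).2 hPM)]
        exact tendsto_const_nhds
      · have hlt : P a y < M := lt_of_le_of_ne (le_maxP hQ y h) hPM
        have h0 : (0:ℝ) ≤ P a y / M := div_nonneg ((hP a).1 y) hM.le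
        have h1 : P a y / M < 1 := (div_lt_one hM).2 hlt
        rw [if_neg (fun hc => hPM (isArgmax_maxP hQ hc))]
        have := (tendsto_rpow_ratio h0 h1).const_mul (Q a)
        simpa using this
  have hQA := QA_pos (P := P) hQ y
  have heq : ∀ᶠ ρ in 𝓝[>] (-1:ℝ),
      Q x * (P x y / M) ^ (1/(1+ρ)) / gfN ρ = Wrho Q P ρ y x := by
    apply eventually_mem_nhdsWithin.mono
    intro ρ hρ
    have hg : 0 < gf Q P ρ y := (gf_pos_iff hρ hP hQ y).2 hy
    have hMc : 0 < M ^ (1/(1+ρ)) := Real.rpow_pos_of_pos hM _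
    have hgfN_eq : gfN ρ = gf Q P ρ y / M ^ (1/(1+ρ)) := by
      rw [hgfNdef]
      simp only
      rw [eq_div_iff hMc.ne', Finset.sum_mul]
      unfold gf
      apply Finset.sum_congr rfl
      intro a _
      rw [Real.div_rpow ((hP a).1 y) hM.le]
      field_simp
    rw [show Wrho Q P ρ y x = Q x * P x y ^ (1/(1+ρ)) / gf Q P ρ y from if_neg hg.ne',
      hgfN_eq, Real.div_rpow ((hP x).1 y) hM.le]
    field_simp
  have hnum : Tendsto (fun ρ : ℝ => Q x * (P x y / M) ^ (1/(1+ρ))) (𝓝[>] (-1:ℝ))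
      (𝓝 (if P x y = M then Q x else 0)) := by
    by_cases hPM : P x y = M
    · rw [if_pos hPM]
      have hone : (fun ρ : ℝ => Q x * (P x y / M) ^ (1/(1+ρ))) = fun _ => Q x := by
        funext ρ
        rw [hPM, div_self hM.ne', Real.one_rpow, mul_one]
      rw [hone]
      exact tendsto_const_nhds
    · rw [if_neg hPM]
      have hlt : P x y < M := lt_of_le_of_ne (le_maxP hQ y hQx) hPM
      have := (tendsto_rpow_ratio (div_nonneg hPx.le hM.le) ((div_lt_one hM).2 hlt)).const_mul
        (Q x)
      simpa using this
  have hVs : Vstar Q P y x = (if P x y = M then Q x else 0) / QA Q P y := by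
    unfold Vstar
    by_cases hPM : P x y = M
    · rw [if_pos ((argmax_iff hQ hQx).2 hPM), if_pos hPM]
    · rw [if_neg (fun hc => hPM (isArgmax_maxP hQ hc)), if_neg hPM, zero_div]
  rw [hVs]
  exact Tendsto.congr' heq (hnum.div hgfN hQA.ne')

lemma tendsto_phi (hP : IsChannel P) (hQ : IsPMF Q) :
    Tendsto (phi Q P) (𝓝[>] (-1:ℝ))
      (𝓝 (DTQr (Tm1 Q P) (Vstar Q P) Q)) := by
  unfold phi DTQr
  apply tendsto_finset_sum
  intro y _
  apply tendsto_finset_sum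
  intro x _
  by_cases hy : ∃ x', 0 < Q x' ∧ 0 < P x' y
  · by_cases hQx : Q x = 0
    · have htgt : Tm1 Q P y * Vstar Q P y x = 0 := by
        have : Vstar Q P y x = 0 := by
          unfold Vstar
          rw [if_neg (fun hc => absurd hc.1 (by rw [hQx]; exact lt_irrefl 0))]
        rw [this, mul_zero]
      apply Tendsto.congr' _ (tendsto_const_nhds (α := ℝ))
      · apply eventually_mem_nhdsWithin.mono
        intro ρ hρ
        show rkl (Tm1 Q P y * Vstar Q P y x) (Tm1 Q P y * Q x)
          = rkl (Trho Q P ρ y * Wrho Q P ρ y x) (Trho Q P ρ y * Q x)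
        rw [htgt, Wrho_zero_of_Qzero hρ hQx, mul_zero, rkl_zero, rkl_zero]
    · have hQx' : 0 < Q x := lt_of_le_of_ne (hQ.1 x) (Ne.symm hQx)
      have hM : 0 < maxP Q P y := (maxP_pos_iff hP hQ y).2 hy
      by_cases hPx : P x y = 0
      · have hVs : Vstar Q P y x = 0 := by
          unfold Vstar
          rw [if_neg]
          intro hc
          rw [isArgmax_maxP hQ hc] at hPx
          exact hM.ne' hPx
        apply Tendsto.congr' _ (tendsto_const_nhds (α := ℝ))
        · apply eventually_mem_nhdsWithin.mono
          intro ρ hρ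
          show rkl (Tm1 Q P y * Vstar Q P y x) (Tm1 Q P y * Q x)
            = rkl (Trho Q P ρ y * Wrho Q P ρ y x) (Trho Q P ρ y * Q x)
          have hg : 0 < gf Q P ρ y := (gf_pos_iff hρ hP hQ y).2 hy
          rw [hVs, mul_zero, rkl_zero,
            show Wrho Q P ρ y x = Q x * P x y ^ (1/(1+ρ)) / gf Q P ρ y from if_neg hg.ne',
            hPx, Real.zero_rpow (invbeta_pos hρ).ne', mul_zero, zero_div, mul_zero, rkl_zero]
      · have hPx' : 0 < P x y := lt_of_le_of_ne ((hP x).1 y) (Ne.symm hPx)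
        have hs_t : Tendsto (fun ρ => Trho Q P ρ y * Wrho Q P ρ y x) (𝓝[>] (-1:ℝ))
            (𝓝 (Tm1 Q P y * Vstar Q P y x)) :=
          (tendsto_Trho hP hQ y).mul (tendsto_W hP hQ hy hQx' hPx')
        have ht_t : Tendsto (fun ρ => Trho Q P ρ y * Q x) (𝓝[>] (-1:ℝ))
            (𝓝 (Tm1 Q P y * Q x)) := (tendsto_Trho hP hQ y).mul_const (Q x)
        have ht0 : 0 < Tm1 Q P y * Q x := by
          apply mul_pos _ hQx'
          rw [Tm1_eq]
          exact div_pos hM (S0_pos hP hQ)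
        -- limit of s log s - s log t
        have hlim : Tendsto (fun ρ => (Trho Q P ρ y * Wrho Q P ρ y x)
            * Real.log (Trho Q P ρ y * Wrho Q P ρ y x)
            - (Trho Q P ρ y * Wrho Q P ρ y x) * Real.log (Trho Q P ρ y * Q x))
            (𝓝[>] (-1:ℝ))
            (𝓝 ((Tm1 Q P y * Vstar Q P y x) * Real.log (Tm1 Q P y * Vstar Q P y x)
              - (Tm1 Q P y * Vstar Q P y x) * Real.log (Tm1 Q P y * Q x))) := by
          apply Tendsto.sub
          · exact (Real.continuous_mul_log.tendsto _).comp hs_t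
          · exact hs_t.mul (((Real.continuousAt_log ht0.ne').tendsto).comp ht_t)
        have htgt : rkl (Tm1 Q P y * Vstar Q P y x) (Tm1 Q P y * Q x)
            = (Tm1 Q P y * Vstar Q P y x) * Real.log (Tm1 Q P y * Vstar Q P y x)
              - (Tm1 Q P y * Vstar Q P y x) * Real.log (Tm1 Q P y * Q x) := by
          by_cases hs0 : Tm1 Q P y * Vstar Q P y x = 0
          · rw [hs0, rkl_zero, zero_mul, zero_mul, sub_zero]
          · unfold rkl
            rw [if_neg hs0, Real.log_div hs0 ht0.ne']
            ring
        rw [htgt]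
        apply Tendsto.congr' _ hlim
        apply eventually_mem_nhdsWithin.mono
        intro ρ hρ
        have hg : 0 < gf Q P ρ y := (gf_pos_iff hρ hP hQ y).2 hy
        have hs : 0 < Trho Q P ρ y * Wrho Q P ρ y x :=
          mul_pos ((Trho_pos_iff hρ hP hQ y).2 hg) (Wrho_pos hρ hP hQ hg hQx' hPx')
        have ht : 0 < Trho Q P ρ y * Q x :=
          mul_pos ((Trho_pos_iff hρ hP hQ y).2 hg) hQx'
        show _ = rkl (Trho Q P ρ y * Wrho Q P ρ y x) (Trho Q P ρ y * Q x)
        unfold rkl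
        rw [if_neg hs.ne', Real.log_div hs.ne' ht.ne']
        ring
  · apply Tendsto.congr' _ (tendsto_const_nhds (α := ℝ))
    · apply eventually_mem_nhdsWithin.mono
      intro ρ hρ
      show rkl (Tm1 Q P y * Vstar Q P y x) (Tm1 Q P y * Q x)
        = rkl (Trho Q P ρ y * Wrho Q P ρ y x) (Trho Q P ρ y * Q x)
      have hT1 : Tm1 Q P y = 0 := by
        rw [Tm1_eq, maxP_eq_zero hP hQ hy, zero_div]
      have hT2 : Trho Q P ρ y = 0 := by
        unfold Trho
        rw [gf_eq_zero hρ hP hQ hy, Real.zero_rpow (beta_pos hρ).ne', zero_div]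
      simp [hT1, hT2, rkl_zero]

lemma exists_rho (hP : IsChannel P) (hQ : IsPMF Q) (R : ℝ) (hMI : MI Q P < R)
    (hRC : R ≤ capacity P {x | 0 < Q x}) :
    ∃ ρ, -1 < ρ ∧ ρ ≤ 0 ∧ phi Q P ρ = R := by
  have hVpmf : IsCondPMF (Vstar Q P) := Vstar_pmf hQ
  have hVadm : AdmissibleAtM1 Q P (Vstar Q P) := Vstar_admissible
  have hid : DTQr (Tm1 Q P) (Vstar Q P) Q
      = DQPr (Tm1 Q P) (Vstar Q P) Q P + Real.log (S0 Q P) := DTQr_adm hP hQ hVpmf hVadm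
  have hD0 : 0 ≤ DQPr (Tm1 Q P) (Vstar Q P) Q P :=
    DQPr_nonneg hP hQ (Tm1_pmf hP hQ) hVpmf (adm_ac hP hQ hVpmf hVadm)
  have hcap := capacity_le_logS0 hP hQ
  have hRL : R < DTQr (Tm1 Q P) (Vstar Q P) Q := by
    rcases eq_or_lt_of_le hD0 with h | h
    · exfalso
      have hjoint := DQPr_eq0 hP hQ (Tm1_pmf hP hQ) hVpmf
        (adm_ac hP hQ hVpmf hVadm) (le_of_eq h.symm)
      have hLMI : DTQr (Tm1 Q P) (Vstar Q P) Q = MI Q P := DTQr_joint_QP hP hQ hVpmf hjoint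
      rw [hLMI] at hid
      linarith
    · linarith
  have hev : ∀ᶠ ρ' in 𝓝[>] (-1:ℝ), R < phi Q P ρ' :=
    (tendsto_phi hP hQ).eventually (eventually_gt_nhds hRL)
  have hmem : Ioo (-1:ℝ) 0 ∈ 𝓝[>] (-1:ℝ) :=
    Ioo_mem_nhdsGT_of_mem ⟨le_refl _, by norm_num⟩
  obtain ⟨ρ₁, hρ₁R, hρ₁m⟩ := (hev.and (Filter.eventually_of_mem hmem (fun _ h => h))).exists
  have hsub : Icc ρ₁ (0:ℝ) ⊆ Ioi (-1:ℝ) := fun z hz => lt_of_lt_of_le hρ₁m.1 hz.1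
  have hcont : ContinuousOn (phi Q P) (Icc ρ₁ 0) := (contOn_phi hP hQ).mono hsub
  have hivt := intermediate_value_Icc' (le_of_lt hρ₁m.2) hcont
  have hRin : R ∈ Icc (phi Q P 0) (phi Q P ρ₁) :=
    ⟨by rw [phi_zero hP hQ]; exact hMI.le, hρ₁R.le⟩
  obtain ⟨ρ2, hρm, hρeq⟩ := hivt hRin
  exact ⟨ρ2, lt_of_lt_of_le hρ₁m.1 hρm.1, hρm.2, hρeq⟩


lemma exists_opt (hP : IsChannel P) (hQ : IsPMF Q) (R : ℝ) (hR0 : 0 ≤ R)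
    (hRC : R ≤ capacity P {x | 0 < Q x}) :
    ∃ T : 𝓨 → ℝ, ∃ V : 𝓨 → 𝓧 → ℝ, ∃ d1 d2 : ℝ, IsPMF T ∧ IsCondPMF V ∧
      DQP T V Q P = (d1 : EReal) ∧ DTQ T V Q = (d2 : EReal) ∧ R ≤ d2 ∧
      (∀ T' V', IsPMF T' → IsCondPMF V' →
        (d1 : EReal) ≤ DQP T' V' Q P + max ((R : EReal) - DTQ T' V' Q) 0) ∧
      (∀ T' V', IsPMF T' → IsCondPMF V' →
        DQP T' V' Q P + max ((R : EReal) - DTQ T' V' Q) 0 = (d1 : EReal) →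
        ∀ x y, T' y * V' y x = T y * V y x) ∧
      (∀ x, (0 < ∑ y, T y * V y x) ↔ 0 < Q x) := by
  rcases le_or_gt R (MI Q P) with hc | hc
  · exact opt_package (by norm_num) (le_refl 0) hP hQ R
      (by rw [phi_zero hP hQ]; exact hc) (by rw [zero_mul])
  · obtain ⟨ρ', h1, h2, h3⟩ := exists_rho hP hQ R hc hRC
    exact opt_package h1 h2 hP hQ R (le_of_eq h3.symm) (by rw [h3, sub_self, mul_zero])


end Main
theorem stmt_15 {𝓧 𝓨 : Type*} [Fintype 𝓧] [Fintype 𝓨] [Nonempty 𝓧] [Nonempty 𝓨]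
    (P : 𝓧 → 𝓨 → ℝ) (hP : IsChannel P) (Q : 𝓧 → ℝ) (hQ : IsPMF Q)
    (R : ℝ) (hR0 : 0 ≤ R) (hRC : R ≤ capacity P {x | 0 < Q x}) :
    ((capacity P {x | 0 < Q x} : ℝ) : EReal) ≤ Rm1minus Q P
    ∧ Ec R Q P = EcML R Q P
    ∧ ∃ T : 𝓨 → ℝ, ∃ V : 𝓨 → 𝓧 → ℝ, IsPMF T ∧ IsCondPMF V ∧
        DQP T V Q P + max ((R : EReal) - DTQ T V Q) 0 = EcML R Q P ∧
        (∀ (T' : 𝓨 → ℝ) (V' : 𝓨 → 𝓧 → ℝ), IsPMF T' → IsCondPMF V' →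
          DQP T' V' Q P + max ((R : EReal) - DTQ T' V' Q) 0 = EcML R Q P →
          ∀ x y, T' y * V' y x = T y * V y x) ∧
        ((R : EReal) ≤ DTQ T V Q ∧ DQP T V Q P = Ec R Q P) ∧
        (∀ x, (0 < ∑ y, T y * V y x) ↔ 0 < Q x)  := by
  classical
  have hcap : capacity P {x | 0 < Q x} ≤ Real.log (S0 Q P) := capacity_le_logS0 hP hQ
  have partA : ((capacity P {x | 0 < Q x} : ℝ) : EReal) ≤ Rm1minus Q P := by
    apply le_sInf
    rintro v ⟨V, hV, hadm, rfl⟩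
    have hacT : ∀ y x, Tm1 Q P y * V y x ≠ 0 → Tm1 Q P y * Q x ≠ 0 := fun y x hs =>
      mul_ne_zero (left_ne_zero_of_mul hs)
        (left_ne_zero_of_mul (adm_ac hP hQ hV hadm y x hs))
    rw [DTQ_eq_coe _ _ _ hacT]
    exact_mod_cast le_trans hcap (logS0_le_DTQr_adm hP hQ hV hadm)
  obtain ⟨T, V, d1, d2, hT, hV, hDQP, hDTQ, hRd2, hlb, huni, hsupp⟩ :=
    exists_opt hP hQ R hR0 hRC
  have hval : DQP T V Q P + max ((R : EReal) - DTQ T V Q) 0 = (d1 : EReal) := by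
    rw [hDQP, hDTQ, show ((R : EReal) - (d2 : EReal)) = ((R - d2 : ℝ) : EReal) from
      (EReal.coe_sub _ _).symm, coe_max0, max_eq_right (sub_nonpos.mpr hRd2)]
    rw [show (((0:ℝ) : ℝ) : EReal) = (0 : EReal) from rfl, add_zero]
  have hEcML : EcML R Q P = (d1 : EReal) := by
    apply le_antisymm
    · exact sInf_le ⟨T, V, hT, hV, hval.symm⟩
    · apply le_sInf
      rintro v ⟨T', V', hT', hV', rfl⟩
      exact hlb T' V' hT' hV'
  have hEc : Ec R Q P = (d1 : EReal) := by
    apply le_antisymm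
    · have hmem : (d1 : EReal) ∈ {v | ∃ T : 𝓨 → ℝ, ∃ V : 𝓨 → 𝓧 → ℝ, IsPMF T ∧ IsCondPMF V ∧
          (R : EReal) ≤ DTQ T V Q ∧ v = DQP T V Q P} :=
        ⟨T, V, hT, hV, by rw [hDTQ]; exact_mod_cast hRd2, hDQP.symm⟩
      exact sInf_le hmem
    · apply le_sInf
      rintro v ⟨T', V', hT', hV', hRle', rfl⟩
      have hlb' := hlb T' V' hT' hV'
      have hz : max ((R : EReal) - DTQ T' V' Q) 0 = 0 :=
        max_eq_right (EReal.sub_le_of_le_add' (by rwa [add_zero]))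
      rwa [hz, add_zero] at hlb'
  refine ⟨partA, by rw [hEc, hEcML], T, V, hT, hV, by rw [hval, hEcML], ?_, ⟨?_, ?_⟩, hsupp⟩
  · intro T' V' hT' hV' h
    apply huni T' V' hT' hV'
    rwa [hEcML] at h
  · rw [hDTQ]; exact_mod_cast hRd2
  · rw [hDQP, hEc]
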